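/- arXiv:1308.2471 — 8 statements merged into one kernel-verified Lean document; each statement's English description precedes it below -/
import Mathlib

section
/- For every graph G, eye(G) ≤ dim(P_G) ≤ 2·eye(G), where P_G is the incidence poset of G. -/
open SimpleGraph

/-- `x` is covered by `y` with respect to the order-like relation `le`. -/
def CovRel {α : Type*} (le : α → α → Prop) (x y : α) : Prop :=
  le x y ∧ x ≠ y ∧ ∀ z, le x z → le z y → z = x ∨ z = y

/-- The cover graph of (the poset given by) the relation `le`. -/
def coverGraph {α : Type*} (le : α → α → Prop) : SimpleGraph α where
  Adj x y := CovRel le x y ∨ CovRel le y x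
  symm := ⟨by intro x y h; tauto⟩
  loopless := ⟨by intro x h; rcases h with ⟨_, h2, _⟩ | ⟨_, h2, _⟩ <;> exact h2 rfl⟩

/-- A family of linear orders whose intersection is `le` (each is then a linear
extension of `le`). -/
def IsRealizer {α : Type*} (le : α → α → Prop) {t : ℕ} (L : Fin t → α → α → Prop) : Prop :=
  (∀ i, IsLinearOrder α (L i)) ∧ ∀ x y, le x y ↔ ∀ i, L i x y

/-- The order dimension of the poset given by `le`: the least positive size of a realizer. -/
noncomputable def dimRel {α : Type*} (le : α → α → Prop) : ℕ :=
  sInf {t | 0 < t ∧ ∃ L : Fin t → α → α → Prop, IsRealizer le L}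

/-- `x` lies strictly between `y` and `z` in the linear order (given as a `≤`-relation) `L`. -/
def StrictBtw {α : Type*} (L : α → α → Prop) (y x z : α) : Prop :=
  (L y x ∧ L x z ∧ x ≠ y ∧ x ≠ z) ∨ (L z x ∧ L x y ∧ x ≠ y ∧ x ≠ z)

/-- A family of linear orders witnessing the eye condition for `G`. -/
def IsEyeFamily {α : Type*} (G : SimpleGraph α) {s : ℕ} (L : Fin s → α → α → Prop) : Prop :=
  (∀ i, IsLinearOrder α (L i)) ∧
  ∀ x y z : α, x ≠ y → x ≠ z → y ≠ z → G.Adj y z → ∃ i, ¬ StrictBtw (L i) y x z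

/-- The eye parameter of a graph. -/
noncomputable def eye {α : Type*} (G : SimpleGraph α) : ℕ :=
  sInf {s | 0 < s ∧ ∃ L : Fin s → α → α → Prop, IsEyeFamily G L}

/-- Ground set of the incidence poset of `G`: vertices together with edges. -/
def IncGround {V : Type*} (G : SimpleGraph V) : Type _ := V ⊕ G.edgeSet

/-- The order of the incidence poset of `G`: vertices are minimal, edges are maximal,
and a vertex is below an edge exactly when it is one of its endpoints
(i.e. inclusion order, viewing edges as 2-element vertex sets). -/
def incLE {V : Type*} (G : SimpleGraph V) : IncGround G → IncGround G → Prop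
  | Sum.inl x, Sum.inl y => x = y
  | Sum.inl x, Sum.inr e => x ∈ (e : Sym2 V)
  | Sum.inr _, Sum.inl _ => False
  | Sum.inr e, Sum.inr f => e = f

/-- The dimension of the incidence poset of `G`. -/
noncomputable def incDim {V : Type*} (G : SimpleGraph V) : ℕ := dimRel (incLE G)

/-- A family of linear extensions of `le` such that whenever `z` covers both `x` and `y`,
some member puts `x` above `y`: an upper-cover realizer. -/
def IsUCRealizer {α : Type*} (le : α → α → Prop) {t : ℕ} (L : Fin t → α → α → Prop) : Prop :=
  (∀ i, IsLinearOrder α (L i)) ∧ (∀ x y, le x y → ∀ i, L i x y) ∧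
  ∀ z x y : α, CovRel le x z → CovRel le y z → x ≠ y → ∃ i, L i y x

/-- The upper cover dimension: least positive size of an upper-cover realizer. -/
noncomputable def dimUC {α : Type*} (le : α → α → Prop) : ℕ :=
  sInf {t | 0 < t ∧ ∃ L : Fin t → α → α → Prop, IsUCRealizer le L}

/-- The poset given by `le` has height exactly `r`. -/
def HeightEq {α : Type*} (le : α → α → Prop) (r : ℕ) : Prop :=
  (∃ c : Finset α, IsChain le (c : Set α) ∧ c.card = r) ∧
  ∀ c : Finset α, IsChain le (c : Set α) → c.card ≤ r


section Aux
variable {V : Type*}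

lemma loRefl {R : V → V → Prop} (hR : IsLinearOrder V R) (x) : R x x :=
  by haveI := hR; exact refl_of R x
lemma loTrans {R : V → V → Prop} (hR : IsLinearOrder V R) {x y z} : R x y → R y z → R x z :=
  fun h h' => hR.toIsPartialOrder.toIsPreorder.toIsTrans.trans _ _ _ h h'
lemma loAntisymm {R : V → V → Prop} (hR : IsLinearOrder V R) {x y} : R x y → R y x → x = y :=
  fun h h' => by haveI := hR; exact antisymm_of R h h'
lemma loTotal {R : V → V → Prop} (hR : IsLinearOrder V R) (x y) : R x y ∨ R y x :=
  by haveI := hR; exact total_of R x y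

lemma flipLin {R : V → V → Prop} (hR : IsLinearOrder V R) : IsLinearOrder V (flip R) :=
  { refl := fun x => loRefl hR x
    trans := fun _ _ _ h h' => loTrans hR h' h
    antisymm := fun _ _ h h' => loAntisymm hR h' h
    total := fun x y => loTotal hR y x }

variable {G : SimpleGraph V}

lemma exists_top (R : V → V → Prop) (hR : IsLinearOrder V R) (e : G.edgeSet) :
    ∃ m, m ∈ (e : Sym2 V) ∧ ∀ x ∈ (e : Sym2 V), R x m := by
  obtain ⟨s, hs⟩ := e
  induction s using Sym2.ind with
  | _ a b =>
    rcases loTotal hR a b with h | h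
    · exact ⟨b, Sym2.mem_mk_right a b, fun x hx => by
        rcases Sym2.mem_iff.1 hx with rfl | rfl
        · exact h
        · exact loRefl hR x⟩
    · exact ⟨a, Sym2.mem_mk_left a b, fun x hx => by
        rcases Sym2.mem_iff.1 hx with rfl | rfl
        · exact loRefl hR x
        · exact h⟩

noncomputable def topEnd (R : V → V → Prop) (hR : IsLinearOrder V R) (e : G.edgeSet) : V :=
  (exists_top R hR e).choose

lemma topEnd_mem (R : V → V → Prop) (hR : IsLinearOrder V R) (e : G.edgeSet) :
    topEnd R hR e ∈ (e : Sym2 V) := (exists_top R hR e).choose_spec.1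
lemma topEnd_max (R : V → V → Prop) (hR : IsLinearOrder V R) (e : G.edgeSet) :
    ∀ x ∈ (e : Sym2 V), R x (topEnd R hR e) := (exists_top R hR e).choose_spec.2

noncomputable def botEnd (R : V → V → Prop) (hR : IsLinearOrder V R) (e : G.edgeSet) : V :=
  topEnd (flip R) (flipLin hR) e

lemma botEnd_mem (R : V → V → Prop) (hR : IsLinearOrder V R) (e : G.edgeSet) :
    botEnd R hR e ∈ (e : Sym2 V) := topEnd_mem _ _ e
lemma botEnd_min (R : V → V → Prop) (hR : IsLinearOrder V R) (e : G.edgeSet) :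
    ∀ x ∈ (e : Sym2 V), R (botEnd R hR e) x := topEnd_max (flip R) (flipLin hR) e

lemma topEnd_unique (R : V → V → Prop) (hR : IsLinearOrder V R) (e : G.edgeSet)
    {t : V} (ht : t ∈ (e : Sym2 V)) (hmax : ∀ x ∈ (e : Sym2 V), R x t) :
    t = topEnd R hR e :=
  loAntisymm hR (topEnd_max R hR e t ht) (hmax _ (topEnd_mem R hR e))

lemma botEnd_ne_topEnd (R : V → V → Prop) (hR : IsLinearOrder V R) (e : G.edgeSet) :
    botEnd R hR e ≠ topEnd R hR e := by
  intro hbt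
  obtain ⟨s, hs⟩ := e
  have hd : ¬ s.IsDiag := G.not_isDiag_of_mem_edgeSet hs
  induction s using Sym2.ind with
  | _ a b =>
    apply hd
    have ha : a = topEnd R hR ⟨s(a, b), hs⟩ :=
      loAntisymm hR (topEnd_max R hR _ a (Sym2.mem_mk_left a b))
        (hbt ▸ botEnd_min R hR _ a (Sym2.mem_mk_left a b))
    have hb : b = topEnd R hR ⟨s(a, b), hs⟩ :=
      loAntisymm hR (topEnd_max R hR _ b (Sym2.mem_mk_right a b))
        (hbt ▸ botEnd_min R hR _ b (Sym2.mem_mk_right a b))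
    rw [Sym2.mk_isDiag_iff]
    exact ha.trans hb.symm

lemma mem_iff_bot_top (R : V → V → Prop) (hR : IsLinearOrder V R) (e : G.edgeSet) (x : V) :
    x ∈ (e : Sym2 V) ↔ x = botEnd R hR e ∨ x = topEnd R hR e := by
  constructor
  · intro hx
    by_contra h
    push_neg at h
    obtain ⟨h1, h2⟩ := h
    -- x, bot, top all in e; but e has only two elements
    obtain ⟨s, hs⟩ := e
    induction s using Sym2.ind with
    | _ a b =>
      have hB := botEnd_mem R hR (⟨s(a, b), hs⟩ : G.edgeSet)
      have hT := topEnd_mem R hR (⟨s(a, b), hs⟩ : G.edgeSet)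
      have hBT := botEnd_ne_topEnd R hR (⟨s(a, b), hs⟩ : G.edgeSet)
      rcases Sym2.mem_iff.1 hx with rfl | rfl <;>
        rcases Sym2.mem_iff.1 hB with hB' | hB' <;>
        rcases Sym2.mem_iff.1 hT with hT' | hT' <;>
        first
          | exact h1 hB'.symm | exact h2 hT'.symm
          | exact hBT (hB'.trans hT'.symm)
  · intro h
    rcases h with rfl | rfl
    · exact botEnd_mem R hR e
    · exact topEnd_mem R hR e

lemma coe_eq_mk_bot_top (R : V → V → Prop) (hR : IsLinearOrder V R) (e : G.edgeSet) :
    (e : Sym2 V) = s(botEnd R hR e, topEnd R hR e) := by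
  obtain ⟨s, hs⟩ := e
  induction s using Sym2.ind with
  | _ a b =>
    have hB := botEnd_mem R hR (⟨s(a, b), hs⟩ : G.edgeSet)
    have hT := topEnd_mem R hR (⟨s(a, b), hs⟩ : G.edgeSet)
    have hBT := botEnd_ne_topEnd R hR (⟨s(a, b), hs⟩ : G.edgeSet)
    rcases Sym2.mem_iff.1 hB with hB' | hB' <;> rcases Sym2.mem_iff.1 hT with hT' | hT'
    · exact absurd (hB'.trans hT'.symm) hBT
    · rw [hB', hT']
    · rw [hB', hT']; exact Sym2.eq_swap
    · exact absurd (hB'.trans hT'.symm) hBT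

lemma edge_ext (R : V → V → Prop) (hR : IsLinearOrder V R) {e f : G.edgeSet}
    (hb : botEnd R hR e = botEnd R hR f) (ht : topEnd R hR e = topEnd R hR f) : e = f := by
  apply Subtype.ext
  have h1 := coe_eq_mk_bot_top R hR e
  have h2 := coe_eq_mk_bot_top R hR f
  show (e : Sym2 V) = (f : Sym2 V)
  rw [h1, h2, hb, ht]

end Aux
section Ext
variable {V : Type*} {G : SimpleGraph V}

/-- Linear order on `V ⊕ G.edgeSet` induced by linear `R` on `V`: each edge placed
just above its `R`-maximal endpoint, ties broken by `R`-minimal endpoints. -/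
def extOrd (G : SimpleGraph V) (R : V → V → Prop) (hR : IsLinearOrder V R) :
    V ⊕ G.edgeSet → V ⊕ G.edgeSet → Prop
  | Sum.inl x, Sum.inl y => R x y
  | Sum.inl x, Sum.inr e => R x (topEnd R hR e)
  | Sum.inr e, Sum.inl x => R (topEnd R hR e) x ∧ x ≠ topEnd R hR e
  | Sum.inr e, Sum.inr f =>
      (R (topEnd R hR e) (topEnd R hR f) ∧ topEnd R hR e ≠ topEnd R hR f) ∨
      (topEnd R hR e = topEnd R hR f ∧ R (botEnd R hR e) (botEnd R hR f))

lemma extOrd_linear (R : V → V → Prop) (hR : IsLinearOrder V R) :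
    IsLinearOrder (V ⊕ G.edgeSet) (extOrd G R hR) := by
  refine { refl := ?_, trans := ?_, antisymm := ?_, total := ?_ }
  · rintro (x | e)
    · exact loRefl hR x
    · exact Or.inr ⟨rfl, loRefl hR _⟩
  · rintro (x | e) (y | f) (z | g) h h' <;> simp only [extOrd] at h h' ⊢
    · exact loTrans hR h h'
    · exact loTrans hR h h'
    · exact loTrans hR h h'.1
    · rcases h' with ⟨h1, _⟩ | ⟨h1, _⟩
      · exact loTrans hR h h1
      · rw [← h1]; exact h
    · refine ⟨loTrans hR h.1 h', ?_⟩
      rintro rfl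
      exact h.2 (loAntisymm hR h' h.1)
    · by_cases ht : topEnd R hR e = topEnd R hR g
      · exfalso
        have h1 : R (topEnd R hR g) y := by rw [← ht]; exact h.1
        have h2 : y = topEnd R hR e := by rw [ht]; exact loAntisymm hR h' h1
        exact h.2 h2
      · exact Or.inl ⟨loTrans hR h.1 h', ht⟩
    · rcases h with ⟨h1, h2⟩ | ⟨h1, h2⟩
      · refine ⟨loTrans hR h1 h'.1, fun hz => ?_⟩
        exact h2 (loAntisymm hR h1 (by rw [← hz]; exact h'.1))
      · rw [h1]; exact h'
    · rcases h with ⟨h1, h2⟩ | ⟨h1, h2⟩ <;> rcases h' with ⟨h1', h2'⟩ | ⟨h1', h2'⟩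
      · exact Or.inl ⟨loTrans hR h1 h1', fun hz => h2 (loAntisymm hR h1 (by rw [hz]; exact h1'))⟩
      · exact Or.inl ⟨by rw [← h1']; exact h1, by rw [← h1']; exact h2⟩
      · exact Or.inl ⟨by rw [h1]; exact h1', by rw [h1]; exact h2'⟩
      · exact Or.inr ⟨h1.trans h1', loTrans hR h2 h2'⟩
  · rintro (x | e) (y | f) h h' <;> simp only [extOrd] at h h'
    · exact congrArg Sum.inl (loAntisymm hR h h')
    · exact absurd (loAntisymm hR h h'.1) h'.2
    · exact absurd (loAntisymm hR h.1 h') (Ne.symm h.2)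
    · rcases h with ⟨h1, h2⟩ | ⟨h1, h2⟩ <;> rcases h' with ⟨h1', h2'⟩ | ⟨h1', h2'⟩
      · exact absurd (loAntisymm hR h1 h1') h2
      · exact absurd h1'.symm h2
      · exact absurd h1.symm h2'
      · exact congrArg Sum.inr (edge_ext R hR (loAntisymm hR h2 h2') h1)
  · rintro (x | e) (y | f) <;> simp only [extOrd]
    · exact loTotal hR x y
    · rcases loTotal hR x (topEnd R hR f) with h | h
      · exact Or.inl h
      · by_cases hx : x = topEnd R hR f
        · exact Or.inl (by rw [hx]; exact loRefl hR _)
        · exact Or.inr ⟨h, hx⟩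
    · rcases loTotal hR y (topEnd R hR e) with h | h
      · exact Or.inr h
      · by_cases hy : y = topEnd R hR e
        · exact Or.inr (by rw [hy]; exact loRefl hR _)
        · exact Or.inl ⟨h, hy⟩
    · by_cases ht : topEnd R hR e = topEnd R hR f
      · rcases loTotal hR (botEnd R hR e) (botEnd R hR f) with h | h
        · exact Or.inl (Or.inr ⟨ht, h⟩)
        · exact Or.inr (Or.inr ⟨ht.symm, h⟩)
      · rcases loTotal hR (topEnd R hR e) (topEnd R hR f) with h | h
        · exact Or.inl (Or.inl ⟨h, ht⟩)
        · exact Or.inr (Or.inl ⟨h, Ne.symm ht⟩)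

lemma extOrd_extends (R : V → V → Prop) (hR : IsLinearOrder V R) :
    ∀ x y, incLE G x y → extOrd G R hR x y := by
  rintro (x | e) (y | f) h
  · exact h ▸ loRefl hR x
  · exact topEnd_max R hR f x h
  · exact h.elim
  · exact h ▸ (Or.inr ⟨rfl, loRefl hR _⟩ :
      (R (topEnd R hR e) (topEnd R hR e) ∧ topEnd R hR e ≠ topEnd R hR e) ∨
      (topEnd R hR e = topEnd R hR e ∧ R (botEnd R hR e) (botEnd R hR e)))

end Ext
section Fam
variable {V : Type*} {G : SimpleGraph V}

/-- The `2s`-member family of linear orders on `V ⊕ G.edgeSet` built from an eye family. -/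
noncomputable def famN (G : SimpleGraph V) {s : ℕ} (L : Fin s → V → V → Prop)
    (hlin : ∀ i, IsLinearOrder V (L i)) (i : Fin (2 * s)) :
    V ⊕ G.edgeSet → V ⊕ G.edgeSet → Prop :=
  if h : (i : ℕ) < s then extOrd G (L ⟨i, h⟩) (hlin ⟨i, h⟩)
  else extOrd G (flip (L ⟨(i : ℕ) - s, by have := i.isLt; omega⟩))
    (flipLin (hlin ⟨(i : ℕ) - s, by have := i.isLt; omega⟩))

lemma famN_linear {s : ℕ} (L : Fin s → V → V → Prop) (hlin : ∀ i, IsLinearOrder V (L i))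
    (i : Fin (2 * s)) : IsLinearOrder (V ⊕ G.edgeSet) (famN G L hlin i) := by
  unfold famN
  split
  · exact extOrd_linear _ _
  · exact extOrd_linear _ _

lemma famN_extends {s : ℕ} (L : Fin s → V → V → Prop) (hlin : ∀ i, IsLinearOrder V (L i))
    (i : Fin (2 * s)) : ∀ x y, incLE G x y → famN G L hlin i x y := by
  unfold famN
  split
  · exact extOrd_extends _ _
  · exact extOrd_extends _ _

lemma famN_lo {s : ℕ} (L : Fin s → V → V → Prop) (hlin : ∀ i, IsLinearOrder V (L i))
    (j : Fin s) :
    famN G L hlin ⟨(j : ℕ), by have := j.isLt; omega⟩ = extOrd G (L j) (hlin j) := by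
  unfold famN
  rw [dif_pos j.isLt]

lemma famN_hi {s : ℕ} (L : Fin s → V → V → Prop) (hlin : ∀ i, IsLinearOrder V (L i))
    (j : Fin s) :
    famN G L hlin ⟨(j : ℕ) + s, by have := j.isLt; omega⟩
      = extOrd G (flip (L j)) (flipLin (hlin j)) := by
  unfold famN
  simp only [Fin.val_mk]
  rw [dif_neg (by omega)]
  have key : ∀ (k : Fin s), k = j →
      extOrd G (flip (L k)) (flipLin (hlin k)) = extOrd G (flip (L j)) (flipLin (hlin j)) := by
    rintro k rfl; rfl
  apply key
  apply Fin.ext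
  simp

end Fam
section Main
variable {V : Type*} {G : SimpleGraph V}

lemma sym2_exists (z : Sym2 V) : ∃ a b, z = s(a, b) :=
  Sym2.ind (fun a b => ⟨a, b, rfl⟩) z

lemma notBtw_cases {L : V → V → Prop} (hL : IsLinearOrder V L) {x a b : V}
    (hxa : x ≠ a) (hxb : x ≠ b) (h : ¬ StrictBtw L a x b) :
    (L x a ∧ L x b) ∨ (L a x ∧ L b x) := by
  rcases loTotal hL a x with h1 | h1 <;> rcases loTotal hL b x with h2 | h2
  · exact Or.inr ⟨h1, h2⟩
  · exact absurd (Or.inl ⟨h1, h2, hxa, hxb⟩) h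
  · exact absurd (Or.inr ⟨h2, h1, hxa, hxb⟩) h
  · exact Or.inl ⟨h1, h2⟩

lemma eye_realizer {s : ℕ} (hs : 0 < s) (L : Fin s → V → V → Prop) (hL : IsEyeFamily G L) :
    IsRealizer (incLE G) (famN G L hL.1) := by
  refine ⟨famN_linear L hL.1, ?_⟩
  intro x y
  constructor
  · exact fun h i => famN_extends L hL.1 i x y h
  · intro hall
    have Hlo : ∀ j : Fin s, extOrd G (L j) (hL.1 j) x y := by
      intro j
      have h := hall ⟨(j : ℕ), by have := j.isLt; omega⟩
      rwa [famN_lo] at h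
    have Hhi : ∀ j : Fin s, extOrd G (flip (L j)) (flipLin (hL.1 j)) x y := by
      intro j
      have h := hall ⟨(j : ℕ) + s, by have := j.isLt; omega⟩
      rwa [famN_hi] at h
    clear hall
    have j0 : Fin s := ⟨0, hs⟩
    rcases x with a | e <;> rcases y with b | f
    · -- vertices
      exact loAntisymm (hL.1 j0) (Hlo j0) (Hhi j0)
    · -- vertex below edge
      show a ∈ (f : Sym2 V)
      by_contra hmem
      obtain ⟨c, d, hcd⟩ := sym2_exists (f : Sym2 V)
      have hadj : G.Adj c d := G.mem_edgeSet.1 (hcd ▸ f.2)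
      have hac : a ≠ c := fun h => hmem (by rw [hcd, h]; exact Sym2.mem_mk_left c d)
      have had : a ≠ d := fun h => hmem (by rw [hcd, h]; exact Sym2.mem_mk_right c d)
      obtain ⟨i, hi⟩ := hL.2 a c d hac had hadj.ne hadj
      rcases notBtw_cases (hL.1 i) hac had hi with ⟨h1, h2⟩ | ⟨h1, h2⟩
      · -- a below both endpoints: the flipped order puts f below a, contradiction
        have hT := topEnd_mem (flip (L i)) (flipLin (hL.1 i)) f
        have hAll : ∀ p ∈ (f : Sym2 V), L i a p := by
          intro p hp
          rw [hcd] at hp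
          rcases Sym2.mem_iff.1 hp with rfl | rfl
          · exact h1
          · exact h2
        have hc1 : L i (topEnd (flip (L i)) (flipLin (hL.1 i)) f) a := Hhi i
        have heq : a = topEnd (flip (L i)) (flipLin (hL.1 i)) f :=
          loAntisymm (hL.1 i) (hAll _ hT) hc1
        exact hmem (by rw [heq]; exact hT)
      · -- a above both endpoints
        have hT := topEnd_mem (L i) (hL.1 i) f
        have hAll : ∀ p ∈ (f : Sym2 V), L i p a := by
          intro p hp
          rw [hcd] at hp
          rcases Sym2.mem_iff.1 hp with rfl | rfl
          · exact h1
          · exact h2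
        have hc1 : L i a (topEnd (L i) (hL.1 i) f) := Hlo i
        have heq : a = topEnd (L i) (hL.1 i) f := loAntisymm (hL.1 i) hc1 (hAll _ hT)
        exact hmem (by rw [heq]; exact hT)
    · -- edge below vertex: impossible
      have hT := Hlo j0
      have hB := Hhi j0
      have hmin : L j0 (botEnd (L j0) (hL.1 j0) e) (topEnd (L j0) (hL.1 j0) e) :=
        botEnd_min _ _ e _ (topEnd_mem _ _ e)
      have hbB : L j0 b (botEnd (L j0) (hL.1 j0) e) := hB.1
      exact (hT.2 (loAntisymm (hL.1 j0) (loTrans (hL.1 j0) hbB hmin) hT.1)).elim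
    · -- two edges
      show e = f
      by_contra hne
      have key : ∀ i : Fin s,
          L i (botEnd (L i) (hL.1 i) f) (botEnd (L i) (hL.1 i) e) ∧
          botEnd (L i) (hL.1 i) e ≠ botEnd (L i) (hL.1 i) f ∧
          L i (topEnd (L i) (hL.1 i) e) (topEnd (L i) (hL.1 i) f) ∧
          topEnd (L i) (hL.1 i) e ≠ topEnd (L i) (hL.1 i) f := by
        intro i
        have hlo := Hlo i
        have hhi := Hhi i
        have hBe : botEnd (flip (L i)) (flipLin (hL.1 i)) e = topEnd (L i) (hL.1 i) e :=
          (topEnd_unique (L i) (hL.1 i) e (botEnd_mem _ _ e)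
            (botEnd_min (flip (L i)) (flipLin (hL.1 i)) e)).symm
        have hBf : botEnd (flip (L i)) (flipLin (hL.1 i)) f = topEnd (L i) (hL.1 i) f :=
          (topEnd_unique (L i) (hL.1 i) f (botEnd_mem _ _ f)
            (botEnd_min (flip (L i)) (flipLin (hL.1 i)) f)).symm
        have hhi' : (L i (botEnd (L i) (hL.1 i) f) (botEnd (L i) (hL.1 i) e) ∧
              botEnd (L i) (hL.1 i) e ≠ botEnd (L i) (hL.1 i) f) ∨
            (botEnd (L i) (hL.1 i) e = botEnd (L i) (hL.1 i) f ∧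
              L i (topEnd (L i) (hL.1 i) f) (topEnd (L i) (hL.1 i) e)) := by
          rcases hhi with ⟨h1, h2⟩ | ⟨h1, h2⟩
          · exact Or.inl ⟨h1, h2⟩
          · refine Or.inr ⟨h1, ?_⟩
            have h2' : flip (L i) (botEnd (flip (L i)) (flipLin (hL.1 i)) e)
                (botEnd (flip (L i)) (flipLin (hL.1 i)) f) := h2
            rw [hBe, hBf] at h2'
            exact h2'
        rcases hhi' with ⟨hb1, hb2⟩ | ⟨hb1, hb2⟩
        · rcases hlo with ⟨ht1, ht2⟩ | ⟨ht1, ht2⟩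
          · exact ⟨hb1, hb2, ht1, ht2⟩
          · exact absurd (loAntisymm (hL.1 i) ht2 hb1) hb2
        · rcases hlo with ⟨ht1, ht2⟩ | ⟨ht1, ht2⟩
          · exact absurd (loAntisymm (hL.1 i) ht1 hb2) ht2
          · exact absurd (edge_ext (L i) (hL.1 i) hb1 ht1) hne
      have between : ∀ (i : Fin s) (p : V), p ∈ (e : Sym2 V) →
          L i (botEnd (L i) (hL.1 i) f) p ∧ p ≠ botEnd (L i) (hL.1 i) f ∧
          L i p (topEnd (L i) (hL.1 i) f) ∧ p ≠ topEnd (L i) (hL.1 i) f := by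
        intro i p hp
        obtain ⟨k1, k2, k3, k4⟩ := key i
        have hmin := botEnd_min (L i) (hL.1 i) e p hp
        have hmax := topEnd_max (L i) (hL.1 i) e p hp
        refine ⟨loTrans (hL.1 i) k1 hmin, ?_, loTrans (hL.1 i) hmax k3, ?_⟩
        · rintro rfl
          exact k2 (loAntisymm (hL.1 i) hmin k1)
        · rintro rfl
          exact k4 (loAntisymm (hL.1 i) k3 hmax)
      obtain ⟨a, b, hab⟩ := sym2_exists (e : Sym2 V)
      obtain ⟨c, d, hcd⟩ := sym2_exists (f : Sym2 V)
      have hadj : G.Adj c d := G.mem_edgeSet.1 (hcd ▸ f.2)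
      have hae : a ∈ (e : Sym2 V) := by rw [hab]; exact Sym2.mem_mk_left a b
      have hanotf : a ∉ (f : Sym2 V) := by
        intro haf
        obtain ⟨_, k2, _, k4⟩ := between j0 a hae
        rcases (mem_iff_bot_top (L j0) (hL.1 j0) f a).1 haf with h | h
        · exact k2 h
        · exact k4 h
      have hac : a ≠ c := fun h => hanotf (by rw [hcd, h]; exact Sym2.mem_mk_left c d)
      have had : a ≠ d := fun h => hanotf (by rw [hcd, h]; exact Sym2.mem_mk_right c d)
      obtain ⟨i, hi⟩ := hL.2 a c d hac had hadj.ne hadj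
      apply hi
      obtain ⟨k1, k2, k3, k4⟩ := between i a hae
      have hcf : c ∈ (f : Sym2 V) := by rw [hcd]; exact Sym2.mem_mk_left c d
      have hdf : d ∈ (f : Sym2 V) := by rw [hcd]; exact Sym2.mem_mk_right c d
      rcases (mem_iff_bot_top (L i) (hL.1 i) f c).1 hcf with hc | hc <;>
        rcases (mem_iff_bot_top (L i) (hL.1 i) f d).1 hdf with hd | hd
      · exact absurd (hc.trans hd.symm) hadj.ne
      · exact Or.inl ⟨by rw [hc]; exact k1, by rw [hd]; exact k3,
          by rw [hc]; exact k2, by rw [hd]; exact k4⟩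
      · exact Or.inr ⟨by rw [hd]; exact k1, by rw [hc]; exact k3,
          by rw [hc]; exact k4, by rw [hd]; exact k2⟩
      · exact absurd (hc.trans hd.symm) hadj.ne

end Main
section Exist
variable {V : Type*}

lemma exists_linear (V : Type*) : ∃ R : V → V → Prop, IsLinearOrder V R := by
  refine ⟨fun a b => a = b ∨ WellOrderingRel a b, ?_⟩
  haveI : IsWellOrder V WellOrderingRel := WellOrderingRel.isWellOrder
  refine { refl := fun x => Or.inl rfl, trans := ?_, antisymm := ?_, total := ?_ }
  · rintro a b c (rfl | h1) h2
    · exact h2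
    · rcases h2 with rfl | h2
      · exact Or.inr h1
      · exact Or.inr (_root_.trans h1 h2)
  · rintro a b (rfl | h1) h2
    · rfl
    · rcases h2 with rfl | h2
      · rfl
      · exact absurd (_root_.trans h1 h2) (irrefl a)
  · intro a b
    rcases trichotomous_of WellOrderingRel a b with h | h | h
    · exact Or.inl (Or.inr h)
    · exact Or.inl (Or.inl h)
    · exact Or.inr (Or.inr h)

/-- The linear order obtained from `R` by moving `v` to the bottom. -/
def vFirst (R : V → V → Prop) (v : V) (a b : V) : Prop := a = v ∨ (b ≠ v ∧ R a b)

lemma vFirst_linear {R : V → V → Prop} (hR : IsLinearOrder V R) (v : V) :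
    IsLinearOrder V (vFirst R v) := by
  refine { refl := ?_, trans := ?_, antisymm := ?_, total := ?_ }
  · intro a
    by_cases h : a = v
    · exact Or.inl h
    · exact Or.inr ⟨h, loRefl hR a⟩
  · rintro a b c (rfl | ⟨hb, hab⟩) h2
    · exact Or.inl rfl
    · rcases h2 with rfl | ⟨hc, hbc⟩
      · exact absurd rfl hb
      · exact Or.inr ⟨hc, loTrans hR hab hbc⟩
  · rintro a b (rfl | ⟨hb, hab⟩) h2
    · rcases h2 with rfl | ⟨hc, _⟩
      · rfl
      · exact absurd rfl hc
    · rcases h2 with rfl | ⟨hc, hba⟩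
      · exact absurd rfl hb
      · exact loAntisymm hR hab hba
  · intro a b
    by_cases ha : a = v
    · exact Or.inl (Or.inl ha)
    · by_cases hb : b = v
      · exact Or.inr (Or.inl hb)
      · rcases loTotal hR a b with h | h
        · exact Or.inl (Or.inr ⟨hb, h⟩)
        · exact Or.inr (Or.inr ⟨ha, h⟩)

lemma vFirst_not_btw {R : V → V → Prop} {v x y z : V} (hvx : v = x)
    (hxy : x ≠ y) (hxz : x ≠ z) : ¬ StrictBtw (vFirst R v) y x z := by
  subst hvx
  rintro (⟨h1, _, _, _⟩ | ⟨h1, _, _, _⟩) <;>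
    rcases h1 with h | ⟨h, _⟩
  · exact hxy h.symm
  · exact h rfl
  · exact hxz h.symm
  · exact h rfl

lemma eye_nonempty [Fintype V] (G : SimpleGraph V) :
    ∃ s, 0 < s ∧ ∃ L : Fin s → V → V → Prop, IsEyeFamily G L := by
  classical
  obtain ⟨R, hR⟩ := exists_linear V
  refine ⟨Fintype.card V + 1, Nat.succ_pos _, fun i =>
    if h : (i : ℕ) < Fintype.card V then vFirst R ((Fintype.equivFin V).symm ⟨i, h⟩)
    else R, ?_, ?_⟩
  · intro i
    dsimp only
    split
    · exact vFirst_linear hR _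
    · exact hR
  · intro x y z hxy hxz _ _
    refine ⟨⟨((Fintype.equivFin V) x : ℕ),
      by have := ((Fintype.equivFin V) x).isLt; omega⟩, ?_⟩
    dsimp only
    rw [dif_pos (((Fintype.equivFin V) x).isLt)]
    exact vFirst_not_btw ((Fintype.equivFin V).symm_apply_apply x) hxy hxz

lemma realizer_to_eye {t : ℕ} (G : SimpleGraph V)
    (N : Fin t → IncGround G → IncGround G → Prop) (hN : IsRealizer (incLE G) N) :
    ∃ L : Fin t → V → V → Prop, IsEyeFamily G L := by
  refine ⟨fun i a b => N i (Sum.inl a) (Sum.inl b), ?_, ?_⟩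
  · intro i
    have h := hN.1 i
    exact { refl := fun x => loRefl h _, trans := fun _ _ _ h1 h2 => loTrans h h1 h2,
            antisymm := fun _ _ h1 h2 => Sum.inl.inj (loAntisymm h h1 h2),
            total := fun a b => loTotal h _ _ }
  · intro x y z hxy hxz _ hadj
    have he : s(y, z) ∈ G.edgeSet := G.mem_edgeSet.2 hadj
    set e : G.edgeSet := ⟨s(y, z), he⟩ with hedef
    have hnx : ¬ incLE G (Sum.inl x) (Sum.inr e) := by
      intro hx
      have hx' : x ∈ (e : Sym2 V) := hx
      rcases Sym2.mem_iff.1 hx' with rfl | rfl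
      · exact hxy rfl
      · exact hxz rfl
    have hnall : ¬ ∀ i, N i (Sum.inl x) (Sum.inr e) := fun hall => hnx ((hN.2 _ _).2 hall)
    push_neg at hnall
    obtain ⟨i, hi⟩ := hnall
    refine ⟨i, ?_⟩
    have hlin := hN.1 i
    have hy : N i (Sum.inl y) (Sum.inr e) :=
      (hN.2 _ _).1 (show incLE G (Sum.inl y) (Sum.inr e) from Sym2.mem_mk_left y z) i
    have hz : N i (Sum.inl z) (Sum.inr e) :=
      (hN.2 _ _).1 (show incLE G (Sum.inl z) (Sum.inr e) from Sym2.mem_mk_right y z) i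
    have hex : N i (Sum.inr e) (Sum.inl x) := by
      rcases loTotal hlin (Sum.inl x) (Sum.inr e) with h | h
      · exact absurd h hi
      · exact h
    have hyx : N i (Sum.inl y) (Sum.inl x) := loTrans hlin hy hex
    have hzx : N i (Sum.inl z) (Sum.inl x) := loTrans hlin hz hex
    rintro (⟨_, h2, _, _⟩ | ⟨_, h2, _, _⟩)
    · exact hxz (Sum.inl.inj (loAntisymm hlin h2 hzx))
    · exact hxy (Sum.inl.inj (loAntisymm hlin h2 hyx))

end Exist
/-- For every graph `G`, `eye(G) ≤ dim(P_G) ≤ 2 · eye(G)`. -/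
theorem stmt_1 {V : Type*} [Fintype V] (G : SimpleGraph V) :
    eye G ≤ incDim G ∧ incDim G ≤ 2 * eye G := by
  have hEs : {s | 0 < s ∧ ∃ L : Fin s → V → V → Prop, IsEyeFamily G L}.Nonempty := by
    obtain ⟨s, hs, L, hL⟩ := eye_nonempty G
    exact ⟨s, hs, L, hL⟩
  have hEye : 0 < eye G ∧ ∃ L : Fin (eye G) → V → V → Prop, IsEyeFamily G L :=
    Nat.sInf_mem hEs
  obtain ⟨hpos, L, hL⟩ := hEye
  have hreal : IsRealizer (incLE G) (famN G L hL.1) := eye_realizer hpos L hL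
  have hDmem : 2 * eye G ∈
      {t | 0 < t ∧ ∃ N : Fin t → IncGround G → IncGround G → Prop, IsRealizer (incLE G) N} :=
    ⟨by omega, famN G L hL.1, hreal⟩
  have hDle : incDim G ≤ 2 * eye G := Nat.sInf_le hDmem
  have hDmem' : 0 < incDim G ∧
      ∃ N : Fin (incDim G) → IncGround G → IncGround G → Prop, IsRealizer (incLE G) N :=
    Nat.sInf_mem ⟨2 * eye G, hDmem⟩
  obtain ⟨hDpos, N, hN⟩ := hDmem'
  obtain ⟨M, hM⟩ := realizer_to_eye G N hN
  have hEle : eye G ≤ incDim G := Nat.sInf_le ⟨hDpos, M, hM⟩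
  exact ⟨hEle, hDle⟩
end

section
/- Let P be a poset with cover graph G and let Q be the incidence poset of G. Then dim(Q) ≤ 2·dim(P). -/
/-- tie-break for the mixed order: vertices below edges in equal-key fibers,
edges compared by `W`. -/
def TieAux {α β : Type*} (W : β → β → Prop) : α ⊕ β → α ⊕ β → Prop
  | Sum.inl _, _ => True
  | Sum.inr _, Sum.inl _ => False
  | Sum.inr e, Sum.inr f => W e f

/-- mixed linear order on `α ⊕ β` via a key map `k : β → α`. -/
def mixRel {α β : Type*} (R : α → α → Prop) (W : β → β → Prop) (k : β → α)
    (u v : α ⊕ β) : Prop :=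
  (R (Sum.elim id k u) (Sum.elim id k v) ∧ Sum.elim id k u ≠ Sum.elim id k v) ∨
    (Sum.elim id k u = Sum.elim id k v ∧ TieAux W u v)

lemma mixRel_inl_inl {α β : Type*} (R : α → α → Prop) (W : β → β → Prop) (k : β → α)
    (x y : α) : mixRel R W k (Sum.inl x) (Sum.inl y) ↔ (R x y ∧ x ≠ y) ∨ x = y := by
  simp [mixRel, TieAux]

lemma mixRel_inl_inr {α β : Type*} (R : α → α → Prop) (W : β → β → Prop) (k : β → α)
    (x : α) (e : β) : mixRel R W k (Sum.inl x) (Sum.inr e) ↔ (R x (k e) ∧ x ≠ k e) ∨ x = k e := by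
  simp [mixRel, TieAux]

lemma mixRel_inr_inl {α β : Type*} (R : α → α → Prop) (W : β → β → Prop) (k : β → α)
    (x : α) (e : β) : mixRel R W k (Sum.inr e) (Sum.inl x) ↔ (R (k e) x ∧ k e ≠ x) := by
  simp [mixRel, TieAux]

lemma mixRel_inr_inr {α β : Type*} (R : α → α → Prop) (W : β → β → Prop) (k : β → α)
    (e f : β) : mixRel R W k (Sum.inr e) (Sum.inr f) ↔
      (R (k e) (k f) ∧ k e ≠ k f) ∨ (k e = k f ∧ W e f) := by
  simp [mixRel, TieAux]

lemma mixRel_isLinearOrder {α β : Type*} {R : α → α → Prop} {W : β → β → Prop}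
    (hR : IsLinearOrder α R) (hW : IsLinearOrder β W) (k : β → α) :
    IsLinearOrder (α ⊕ β) (mixRel R W k) := by
  haveI := hR; haveI := hW
  have rtrans : ∀ {a b c : α}, R a b → R b c → R a c := fun h h' => trans_of R h h'
  have ranti : ∀ {a b : α}, R a b → R b a → a = b := fun h h' => antisymm_of R h h'
  have rtot : ∀ a b : α, R a b ∨ R b a := fun a b => total_of R a b
  have tie_refl : ∀ u : α ⊕ β, TieAux W u u := by
    rintro (x | e)
    · trivial
    · exact refl_of W e
  have tie_trans : ∀ u v w : α ⊕ β, TieAux W u v → TieAux W v w → TieAux W u w := by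
    rintro (x | e) (y | f) (z | g) h1 h2 <;>
      first | trivial | exact h1.elim | exact h2.elim | exact trans_of W h1 h2
  have tie_antisymm : ∀ u v : α ⊕ β, Sum.elim id k u = Sum.elim id k v →
      TieAux W u v → TieAux W v u → u = v := by
    rintro (x | e) (y | f) hK h1 h2
    · simp only [Sum.elim_inl, id_eq] at hK; exact congrArg _ hK
    · exact h2.elim
    · exact h1.elim
    · exact congrArg _ (antisymm_of W h1 h2)
  have tie_total : ∀ u v : α ⊕ β, TieAux W u v ∨ TieAux W v u := by
    rintro (x | e) (y | f)
    · left; trivial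
    · left; trivial
    · right; trivial
    · exact total_of W e f
  refine { refl := ?_, trans := ?_, antisymm := ?_, total := ?_ }
  · intro u; exact Or.inr ⟨rfl, tie_refl u⟩
  · intro u v w h1 h2
    rcases h1 with ⟨h1, hne1⟩ | ⟨heq1, ht1⟩ <;> rcases h2 with ⟨h2, hne2⟩ | ⟨heq2, ht2⟩
    · refine Or.inl ⟨rtrans h1 h2, fun hc => hne1 (ranti h1 ?_)⟩
      rw [hc]; exact h2
    · rw [heq2] at h1 hne1; exact Or.inl ⟨h1, hne1⟩
    · left; rw [heq1]; exact ⟨h2, hne2⟩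
    · exact Or.inr ⟨heq1.trans heq2, tie_trans _ _ _ ht1 ht2⟩
  · intro u v h1 h2
    rcases h1 with ⟨h1, hne1⟩ | ⟨heq1, ht1⟩ <;> rcases h2 with ⟨h2, hne2⟩ | ⟨heq2, ht2⟩
    · exact absurd (ranti h1 h2) hne1
    · exact absurd heq2.symm hne1
    · exact absurd heq1.symm hne2
    · exact tie_antisymm _ _ heq1 ht1 ht2
  · intro u v
    by_cases hK : Sum.elim id k u = Sum.elim id k v
    · rcases tie_total u v with h | h
      · exact Or.inl (Or.inr ⟨hK, h⟩)
      · exact Or.inr (Or.inr ⟨hK.symm, h⟩)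
    · rcases rtot (Sum.elim id k u) (Sum.elim id k v) with h | h
      · exact Or.inl (Or.inl ⟨h, hK⟩)
      · exact Or.inr (Or.inl ⟨h, Ne.symm hK⟩)

lemma flip_isLinearOrder {α : Type*} {R : α → α → Prop} (h : IsLinearOrder α R) :
    IsLinearOrder α (flip R) := by
  haveI := h
  exact { refl := fun a => refl_of R a,
          trans := fun a b c h1 h2 => trans_of R h2 h1,
          antisymm := fun a b h1 h2 => antisymm_of R h2 h1,
          total := fun a b => total_of R b a }



/-- For any pair there is a linear extension of `≤` putting `y` below `x`
whenever `x ≤ y` fails. -/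
lemma exists_linext {α : Type*} [PartialOrder α] (x y : α) :
    ∃ s : α → α → Prop, IsLinearOrder α s ∧ (∀ a b : α, a ≤ b → s a b) ∧ (¬ x ≤ y → s y x) := by
  by_cases h : x ≤ y
  · haveI : IsPartialOrder α (· ≤ ·) :=
      { refl := le_refl, trans := fun _ _ _ => le_trans, antisymm := fun _ _ => le_antisymm }
    obtain ⟨s, hs, hle⟩ := extend_partialOrder ((· ≤ ·) : α → α → Prop)
    exact ⟨s, hs, fun a b hab => hle a b hab, fun hc => absurd h hc⟩
  · set r : α → α → Prop := fun a b => a ≤ b ∨ (a ≤ y ∧ x ≤ b) with hr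
    haveI : IsPartialOrder α r := by
      refine { refl := fun a => Or.inl le_rfl, trans := ?_, antisymm := ?_ }
      · rintro a b c (hab | ⟨hay, hxb⟩) (hbc | ⟨hby, hxc⟩)
        · exact Or.inl (hab.trans hbc)
        · exact Or.inr ⟨hab.trans hby, hxc⟩
        · exact Or.inr ⟨hay, hxb.trans hbc⟩
        · exact absurd (hxb.trans hby) h
      · rintro a b (hab | ⟨hay, hxb⟩) (hba | ⟨hby, hxa⟩)
        · exact le_antisymm hab hba
        · exact absurd (hxa.trans (hab.trans hby)) h
        · exact absurd (hxb.trans (hba.trans hay)) h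
        · exact absurd (hxb.trans hby) h
    obtain ⟨s, hs, hle⟩ := extend_partialOrder r
    exact ⟨s, hs, fun a b hab => hle a b (Or.inl hab),
      fun _ => hle y x (Or.inr ⟨le_rfl, le_rfl⟩)⟩

lemma exists_realizer (α : Type*) [Fintype α] [PartialOrder α] :
    ∃ t : ℕ, 0 < t ∧ ∃ L : Fin t → α → α → Prop, IsRealizer ((· ≤ ·) : α → α → Prop) L := by
  classical
  cases isEmpty_or_nonempty α with
  | inl h =>
    refine ⟨1, one_pos, fun _ _ _ => True, fun i => ?_, fun x y => isEmptyElim x⟩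
    exact { refl := fun _ => trivial, trans := fun _ _ _ _ _ => trivial,
            antisymm := fun a => isEmptyElim a, total := fun _ _ => Or.inl trivial }
  | inr h =>
    let e := (Fintype.equivFin (α × α)).symm
    have hnpos : 0 < Fintype.card (α × α) := Fintype.card_pos
    choose s hs hs2 hs3 using fun p : α × α => exists_linext p.1 p.2
    refine ⟨Fintype.card (α × α), hnpos, fun j => s (e j), fun i => hs _,
      fun x y => ⟨fun hxy i => hs2 _ _ _ hxy, fun hall => ?_⟩⟩
    by_contra hxy
    have h1 := hall (e.symm (x, y))
    simp only [Equiv.apply_symm_apply] at h1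
    have h2 := hs3 (x, y) hxy
    haveI := hs (x, y)
    exact hxy (le_of_eq (antisymm_of (s (x, y)) h1 h2))



open SimpleGraph


/-- If `G` is the cover graph of a poset `P` and `Q` the incidence poset of `G`,
then `dim(Q) ≤ 2 · dim(P)`. -/
theorem stmt_2 {α : Type*} [Fintype α] [PartialOrder α] :
    incDim (coverGraph ((· ≤ ·) : α → α → Prop)) ≤ 2 * dimRel ((· ≤ ·) : α → α → Prop) := by
  classical
  obtain ⟨t0, ht0, L0, hL0⟩ := exists_realizer α
  have hd : dimRel ((· ≤ ·) : α → α → Prop) ∈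
      {t | 0 < t ∧ ∃ L : Fin t → α → α → Prop, IsRealizer ((· ≤ ·) : α → α → Prop) L} :=
    Nat.sInf_mem ⟨t0, ht0, L0, hL0⟩
  set d := dimRel ((· ≤ ·) : α → α → Prop) with hdd
  simp only [Set.mem_setOf_eq] at hd
  obtain ⟨hdpos, L, hLlin, hLiff⟩ := hd
  set G := coverGraph ((· ≤ ·) : α → α → Prop) with hG
  -- decompose each edge into its cover pair
  have hedge0 : ∀ e : Sym2 α, e ∈ G.edgeSet →
      ∃ p : α × α, CovRel (· ≤ ·) p.1 p.2 ∧ e = s(p.1, p.2) := by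
    intro e
    induction e using Sym2.ind with
    | _ x y =>
      intro he
      rw [hG, SimpleGraph.mem_edgeSet] at he
      rcases he with hc | hc
      · exact ⟨(x, y), hc, rfl⟩
      · exact ⟨(y, x), hc, Sym2.eq_swap⟩
  choose bt hbt1 hbt2 using fun e : G.edgeSet => hedge0 e e.2
  -- basic cover facts
  have hble : ∀ e, (bt e).1 ≤ (bt e).2 := fun e => (hbt1 e).1
  have hbne : ∀ e, (bt e).1 ≠ (bt e).2 := fun e => (hbt1 e).2.1
  have hbetween : ∀ e (x : α), (bt e).1 ≤ x → x ≤ (bt e).2 → x = (bt e).1 ∨ x = (bt e).2 :=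
    fun e x h1 h2 => (hbt1 e).2.2 x h1 h2
  have hmem : ∀ (e : G.edgeSet) (x : α), x ∈ (e : Sym2 α) ↔ x = (bt e).1 ∨ x = (bt e).2 := by
    intro e x; rw [hbt2 e]; exact Sym2.mem_iff
  have hext : ∀ e f : G.edgeSet, (bt e).1 = (bt f).1 → (bt e).2 = (bt f).2 → e = f := by
    intro e f h1 h2
    have : (e : Sym2 α) = (f : Sym2 α) := by rw [hbt2 e, hbt2 f, h1, h2]
    exact Subtype.ext this
  -- tiebreak linear order on edges
  haveI : IsPartialOrder G.edgeSet (· = ·) :=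
    { refl := fun _ => rfl, trans := fun _ _ _ h h' => h.trans h', antisymm := fun _ _ h _ => h }
  obtain ⟨W, hWlin, -⟩ := extend_partialOrder ((· = ·) : G.edgeSet → G.edgeSet → Prop)
  -- helper facts about the realizer
  have hLle : ∀ {x y : α}, x ≤ y → ∀ i, L i x y := fun h i => (hLiff _ _).1 h i
  have hLnot : ∀ {x y : α}, ¬ x ≤ y → ∃ i, ¬ L i x y := by
    intro x y h; by_contra hc; push_neg at hc; exact h ((hLiff x y).2 hc)
  have hLanti : ∀ (i : Fin d) {x y : α}, L i x y → L i y x → x = y := by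
    intro i x y h h'; haveI := hLlin i; exact antisymm_of (L i) h h'
  -- the two families of orders on the incidence ground set
  set A : Fin d → (α ⊕ G.edgeSet) → (α ⊕ G.edgeSet) → Prop :=
    fun i => mixRel (L i) W (fun e => (bt e).2) with hA
  set B : Fin d → (α ⊕ G.edgeSet) → (α ⊕ G.edgeSet) → Prop :=
    fun i => mixRel (flip (L i)) W (fun e => (bt e).1) with hB
  have hAlin : ∀ i, IsLinearOrder _ (A i) := fun i => mixRel_isLinearOrder (hLlin i) hWlin _
  have hBlin : ∀ i, IsLinearOrder _ (B i) :=
    fun i => mixRel_isLinearOrder (flip_isLinearOrder (hLlin i)) hWlin _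
  set M : Fin (2 * d) → (α ⊕ G.edgeSet) → (α ⊕ G.edgeSet) → Prop :=
    fun j => if h : (j : ℕ) < d then A ⟨j, h⟩ else B ⟨(j : ℕ) - d, by omega⟩ with hM
  have hMA : ∀ (i : Fin d) (u v), (∀ j, M j u v) → A i u v := by
    intro i u v hall
    have h := hall ⟨(i : ℕ), by omega⟩
    simp only [hM] at h
    rw [dif_pos (show ((⟨(i : ℕ), by omega⟩ : Fin (2 * d)) : ℕ) < d from i.isLt)] at h
    convert h using 2
  have hMB : ∀ (i : Fin d) (u v), (∀ j, M j u v) → B i u v := by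
    intro i u v hall
    have h := hall ⟨d + (i : ℕ), by omega⟩
    simp only [hM] at h
    rw [dif_neg (show ¬ ((⟨d + (i : ℕ), by omega⟩ : Fin (2 * d)) : ℕ) < d by simp)] at h
    convert h using 2
    simp
  -- forward direction: each order extends incLE
  have hAle : ∀ (i : Fin d) (u v), incLE G u v → A i u v := by
    rintro i (x | e) (y | f) h
    · have hxy : x = y := h
      subst hxy
      haveI := hAlin i
      exact refl_of (A i) _
    · have h' : x ∈ (f : Sym2 α) := h
      simp only [hA, mixRel_inl_inr]
      rcases (hmem f x).1 h' with rfl | rfl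
      · exact Or.inl ⟨hLle (hble f) i, hbne f⟩
      · exact Or.inr rfl
    · exact h.elim
    · have hef : e = f := h
      subst hef
      haveI := hAlin i
      exact refl_of (A i) _
  have hBle : ∀ (i : Fin d) (u v), incLE G u v → B i u v := by
    rintro i (x | e) (y | f) h
    · have hxy : x = y := h
      subst hxy
      haveI := hBlin i
      exact refl_of (B i) _
    · have h' : x ∈ (f : Sym2 α) := h
      simp only [hB, mixRel_inl_inr]
      rcases (hmem f x).1 h' with rfl | rfl
      · exact Or.inr rfl
      · exact Or.inl ⟨hLle (hble f) i, Ne.symm (hbne f)⟩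
    · exact h.elim
    · have hef : e = f := h
      subst hef
      haveI := hBlin i
      exact refl_of (B i) _
  -- backward direction: non-relations are reversed somewhere
  have hrev : ∀ u v, ¬ incLE G u v → (∃ i, ¬ A i u v) ∨ (∃ i, ¬ B i u v) := by
    rintro (x | e) (y | f) h
    · -- two distinct vertices
      have hxy : x ≠ y := fun hc => h hc
      by_cases hle : x ≤ y
      · refine Or.inr ⟨⟨0, hdpos⟩, ?_⟩
        simp only [hB, mixRel_inl_inl]
        rintro (⟨h1, hne⟩ | rfl)
        · exact hne (hLanti _ (hLle hle _) h1)
        · exact hxy rfl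
      · obtain ⟨i, hi⟩ := hLnot hle
        refine Or.inl ⟨i, ?_⟩
        simp only [hA, mixRel_inl_inl]
        rintro (⟨h1, -⟩ | rfl)
        · exact hi h1
        · exact hxy rfl
    · -- vertex not on edge
      have hx : ¬ (x = (bt f).1 ∨ x = (bt f).2) := fun hc => h ((hmem f x).2 hc)
      push_neg at hx
      obtain ⟨hxb, hxt⟩ := hx
      by_cases h1 : x ≤ (bt f).2
      · by_cases h2 : (bt f).1 ≤ x
        · rcases hbetween f x h2 h1 with hc | hc
          · exact absurd hc hxb
          · exact absurd hc hxt
        · obtain ⟨i, hi⟩ := hLnot h2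
          refine Or.inr ⟨i, ?_⟩
          simp only [hB, mixRel_inl_inr]
          rintro (⟨hf, -⟩ | hc)
          · exact hi hf
          · exact hxb hc
      · obtain ⟨i, hi⟩ := hLnot h1
        refine Or.inl ⟨i, ?_⟩
        simp only [hA, mixRel_inl_inr]
        rintro (⟨hf, -⟩ | hc)
        · exact hi hf
        · exact hxt hc
    · -- edge never below vertex
      by_cases hyt : y = (bt e).2
      · refine Or.inl ⟨⟨0, hdpos⟩, ?_⟩
        simp only [hA, mixRel_inr_inl]
        rintro ⟨-, hne⟩
        exact hne hyt.symm
      · by_cases h1 : (bt e).2 ≤ y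
        · by_cases hyb : y = (bt e).1
          · refine Or.inr ⟨⟨0, hdpos⟩, ?_⟩
            simp only [hB, mixRel_inr_inl]
            rintro ⟨-, hne⟩
            exact hne hyb.symm
          · by_cases h2 : y ≤ (bt e).1
            · exact absurd (le_antisymm (hble e) (h1.trans h2)) (hbne e)
            · obtain ⟨i, hi⟩ := hLnot h2
              refine Or.inr ⟨i, ?_⟩
              simp only [hB, mixRel_inr_inl]
              rintro ⟨hf, -⟩
              exact hi hf
        · obtain ⟨i, hi⟩ := hLnot h1
          refine Or.inl ⟨i, ?_⟩
          simp only [hA, mixRel_inr_inl]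
          rintro ⟨hf, -⟩
          exact hi hf
    · -- two distinct edges
      have hef : e ≠ f := fun hc => h hc
      by_cases ht : (bt e).2 = (bt f).2
      · have hb : (bt e).1 ≠ (bt f).1 := fun hb => hef (hext e f hb ht)
        have hnle : ¬ (bt f).1 ≤ (bt e).1 := by
          intro hle2
          have h1 : (bt e).1 ≤ (bt f).2 := ht ▸ hble e
          rcases hbetween f _ hle2 h1 with h' | h'
          · exact hb h'
          · exact hbne e (h'.trans ht.symm)
        obtain ⟨i, hi⟩ := hLnot hnle
        refine Or.inr ⟨i, ?_⟩
        simp only [hB, mixRel_inr_inr]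
        rintro (⟨hf', -⟩ | ⟨heq, -⟩)
        · exact hi hf'
        · exact hb heq
      · by_cases hle : (bt e).2 ≤ (bt f).2
        · have hnle : ¬ (bt f).1 ≤ (bt e).1 := by
            intro h2
            have h3 : (bt e).1 ≤ (bt f).2 := le_trans (hble e) hle
            rcases hbetween f _ h2 h3 with h' | h'
            · rcases hbetween f ((bt e).2) (h' ▸ hble e) hle with h'' | h''
              · exact hbne e (h'.trans h''.symm ▸ rfl)
              · exact ht h''
            · exact hbne e (le_antisymm (hble e) (by rw [h']; exact hle))
          obtain ⟨i, hi⟩ := hLnot hnle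
          refine Or.inr ⟨i, ?_⟩
          simp only [hB, mixRel_inr_inr]
          rintro (⟨hf', -⟩ | ⟨heq, -⟩)
          · exact hi hf'
          · exact hnle (le_of_eq heq.symm)
        · obtain ⟨i, hi⟩ := hLnot hle
          refine Or.inl ⟨i, ?_⟩
          simp only [hA, mixRel_inr_inr]
          rintro (⟨hf', -⟩ | ⟨heq, -⟩)
          · exact hi hf'
          · exact ht heq
  -- conclude
  have h2d : (2 * d) ∈ {t | 0 < t ∧
      ∃ L : Fin t → IncGround G → IncGround G → Prop, IsRealizer (incLE G) L} := by
    refine ⟨by omega, M, fun j => ?_, fun u v => ⟨fun huv j => ?_, fun hall => ?_⟩⟩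
    · rw [hM]
      dsimp only
      split
      · exact hAlin _
      · exact hBlin _
    · rw [hM]
      dsimp only
      split
      · exact hAle _ _ _ huv
      · exact hBle _ _ _ huv
    · by_contra hne
      rcases hrev u v hne with ⟨i, hi⟩ | ⟨i, hi⟩
      · exact hi (hMA i u v hall)
      · exact hi (hMB i u v hall)
  exact Nat.sInf_le h2d
end

section
/- Let n ≥ 5 be odd and let G be the cycle on vertices a_1,...,a_n (with edges {a_i, a_{i+1}} for 1 ≤ i ≤ n−1 and edge {a_n, a_1}). Then eye(G) ≤ 2. -/
open SimpleGraph

/-- An odd cycle on `n ≥ 5` vertices has eye parameter at most `2`. -/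
theorem stmt_7 (n : ℕ) (h5 : 5 ≤ n) (hodd : Odd n) :
    eye (SimpleGraph.cycleGraph n) ≤ 2 := by
  haveI : NeZero n := ⟨by omega⟩
  have hone : (1 : Fin n).val = 1 := by
    rw [Fin.val_one']; exact Nat.mod_eq_of_lt (by omega)
  set L1 : Fin n → Fin n → Prop := (· ≤ ·) with hL1
  set L2 : Fin n → Fin n → Prop := fun a b => a - 1 ≤ b - 1 with hL2
  set L : Fin 2 → Fin n → Fin n → Prop := ![L1, L2] with hL
  have hL0 : L 0 = L1 := rfl
  have hLone : L 1 = L2 := rfl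
  have hlin : ∀ i, IsLinearOrder (Fin n) (L i) := by
    intro i
    fin_cases i
    · exact inferInstanceAs (IsLinearOrder (Fin n) (· ≤ ·))
    · refine { refl := ?_, trans := ?_, antisymm := ?_, total := ?_ }
      · exact fun a => le_refl _
      · exact fun a b c h1 h2 => le_trans h1 h2
      · exact fun a b h1 h2 => sub_left_injective (le_antisymm h1 h2)
      · exact fun a b => le_total _ _
  -- key lemma: if z = y + 1 cyclically, some order has no vertex strictly between y and z
  have key : ∀ x y z : Fin n, x ≠ y → x ≠ z → (z - y).val = 1 →
      ∃ i, ¬ StrictBtw (L i) y x z := by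
    intro x y z hxy hxz hsub
    rw [Fin.sub_def] at hsub
    simp only at hsub
    have hy : y.val < n := y.isLt
    have hz : z.val < n := z.isLt
    have hx : x.val < n := x.isLt
    have hm : n - y.val + z.val = 1 ∨ n - y.val + z.val = n + 1 := by
      rcases Nat.lt_or_ge (n - y.val + z.val) n with h | h
      · left; rwa [Nat.mod_eq_of_lt h] at hsub
      · right
        rw [Nat.mod_eq_sub_mod h, Nat.mod_eq_of_lt (by omega)] at hsub
        omega
    have hxy' : x.val ≠ y.val := fun h => hxy (Fin.ext h)
    have hxz' : x.val ≠ z.val := fun h => hxz (Fin.ext h)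
    rcases hm with hm | hm
    · -- wrap-around edge: y = n-1, z = 0; use L 1
      have hyv : y.val = n - 1 := by omega
      have hzv : z.val = 0 := by omega
      refine ⟨1, ?_⟩
      rw [hLone, hL2]
      have hyval : (y - 1).val = n - 2 := by
        rw [Fin.sub_def]
        simp only [hone, hyv]
        rw [Nat.mod_eq_sub_mod (by omega), Nat.mod_eq_of_lt (by omega)]
        omega
      have hzval : (z - 1).val = n - 1 := by
        rw [Fin.sub_def]
        simp only [hone, hzv]
        rw [Nat.mod_eq_of_lt (by omega)]
        omega
      intro hs
      rcases hs with ⟨h1, h2, _, _⟩ | ⟨h1, h2, _, _⟩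
      · rw [Fin.le_def] at h1 h2
        have hxv : (x - 1).val = n - 2 ∨ (x - 1).val = n - 1 := by omega
        rcases hxv with hv | hv
        · exact hxy (sub_left_injective (Fin.ext (hv.trans hyval.symm)))
        · exact hxz (sub_left_injective (Fin.ext (hv.trans hzval.symm)))
      · rw [Fin.le_def] at h1 h2
        omega
    · -- normal edge: z.val = y.val + 1; use L 0
      have hzv : z.val = y.val + 1 := by omega
      refine ⟨0, ?_⟩
      rw [hL0, hL1]
      intro hs
      rcases hs with ⟨h1, h2, _, _⟩ | ⟨h1, h2, _, _⟩ <;>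
        (rw [Fin.le_def] at h1 h2; omega)
  refine Nat.sInf_le ⟨by norm_num, L, hlin, ?_⟩
  intro x y z hxy hxz hyz hadj
  rw [SimpleGraph.cycleGraph_adj'] at hadj
  rcases hadj with h | h
  · -- (y - z).val = 1, i.e. y = z + 1; apply key with roles swapped
    obtain ⟨i, hi⟩ := key x z y hxz hxy h
    refine ⟨i, fun hs => hi ?_⟩
    rcases hs with h' | h'
    · exact Or.inr ⟨h'.1, h'.2.1, h'.2.2.2, h'.2.2.1⟩
    · exact Or.inl ⟨h'.1, h'.2.1, h'.2.2.2, h'.2.2.1⟩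
  · exact key x y z hxy hxz h
end

section
/- Let P_r denote the incidence poset of the complete graph K_r. Then dim(P_r) ≥ lg lg r, where lg denotes the base-2 logarithm. -/
open SimpleGraph

noncomputable def chainFam {α : Type*} (Q : α → α → Prop) (S : Finset α) (x : α) :
    Finset (Finset α) :=
  @Finset.filter _ (fun c => x ∈ c ∧ (∀ a ∈ c, Q a x) ∧ ∀ a ∈ c, ∀ b ∈ c, Q a b ∨ Q b a)
    (fun c => Classical.propDecidable _) S.powerset

lemma mem_chainFam {α : Type*} {Q : α → α → Prop} {S : Finset α} {x : α} {c : Finset α} :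
    c ∈ chainFam Q S x ↔
      c ⊆ S ∧ x ∈ c ∧ (∀ a ∈ c, Q a x) ∧ ∀ a ∈ c, ∀ b ∈ c, Q a b ∨ Q b a := by
  letI : DecidablePred (fun c : Finset α =>
      x ∈ c ∧ (∀ a ∈ c, Q a x) ∧ ∀ a ∈ c, ∀ b ∈ c, Q a b ∨ Q b a) :=
    fun c => Classical.propDecidable _
  unfold chainFam
  rw [Finset.mem_filter, Finset.mem_powerset]

noncomputable def chainVal {α : Type*} (Q : α → α → Prop) (S : Finset α) (x : α) : ℕ :=
  (chainFam Q S x).sup Finset.card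

variable {α : Type*} {Q : α → α → Prop} {S : Finset α} {x : α}

lemma le_chainVal {c : Finset α} (hcS : c ⊆ S) (hx : x ∈ c) (htop : ∀ a ∈ c, Q a x)
    (hch : ∀ a ∈ c, ∀ b ∈ c, Q a b ∨ Q b a) : c.card ≤ chainVal Q S x :=
  Finset.le_sup (f := Finset.card) (mem_chainFam.2 ⟨hcS, hx, htop, hch⟩)

lemma exists_chainVal (hrefl : Q x x) (hx : x ∈ S) :
    ∃ c : Finset α, c ⊆ S ∧ x ∈ c ∧ (∀ a ∈ c, Q a x) ∧
      (∀ a ∈ c, ∀ b ∈ c, Q a b ∨ Q b a) ∧ c.card = chainVal Q S x := by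
  have hne : (chainFam Q S x).Nonempty := by
    refine ⟨{x}, mem_chainFam.2 ⟨Finset.singleton_subset_iff.2 hx,
      Finset.mem_singleton_self x, ?_, ?_⟩⟩
    · intro a ha; rcases Finset.mem_singleton.1 ha with rfl; exact hrefl
    · intro a ha b hb
      rcases Finset.mem_singleton.1 ha with rfl
      rcases Finset.mem_singleton.1 hb with rfl
      exact Or.inl hrefl
  obtain ⟨c, hc, hcs⟩ := Finset.exists_mem_eq_sup _ hne Finset.card
  rw [mem_chainFam] at hc
  exact ⟨c, hc.1, hc.2.1, hc.2.2.1, hc.2.2.2, hcs.symm⟩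

lemma chainVal_le {k : ℕ}
    (h : ∀ c : Finset α, c ⊆ S → (∀ a ∈ c, ∀ b ∈ c, Q a b ∨ Q b a) → c.card ≤ k) :
    chainVal Q S x ≤ k := by
  refine Finset.sup_le ?_
  intro c hc
  rw [mem_chainFam] at hc
  exact h c hc.1 hc.2.2.2


lemma chainVal_pos {α : Type*} {Q : α → α → Prop} {S : Finset α} {x : α}
    (hrefl : Q x x) (hx : x ∈ S) : 1 ≤ chainVal Q S x := by
  have := le_chainVal (S := S) (x := x) (Q := Q) (c := {x})
    (by simpa using hx) (Finset.mem_singleton_self x)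
    (by rintro a ha; rcases Finset.mem_singleton.1 ha with rfl; exact hrefl)
    (by rintro a ha b hb;
        rcases Finset.mem_singleton.1 ha with rfl
        rcases Finset.mem_singleton.1 hb with rfl
        exact Or.inl hrefl)
  simpa using this

lemma chainVal_lt {α : Type*} {Q : α → α → Prop} {S : Finset α} {x y : α}
    (hrefl : ∀ a, Q a a) (htrans : ∀ a b c, Q a b → Q b c → Q a c)
    (hanti : ∀ a b, Q a b → Q b a → a = b)
    (hx : x ∈ S) (hy : y ∈ S) (hxy : Q x y) (hne : x ≠ y) :
    chainVal Q S x < chainVal Q S y := by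
  classical
  obtain ⟨c, hcS, hxc, hcx, hcchain, hccard⟩ := exists_chainVal (hrefl x) hx
  have hyc : y ∉ c := fun hyc => hne (hanti x y hxy (hcx y hyc))
  have h1 : (insert y c).card ≤ chainVal Q S y := by
    refine le_chainVal (Finset.insert_subset hy hcS) (Finset.mem_insert_self _ _) ?_ ?_
    · intro a ha
      rcases Finset.mem_insert.1 ha with h | ha
      · subst h; exact hrefl _
      · exact htrans a x y (hcx a ha) hxy
    · intro a ha b hb
      rcases Finset.mem_insert.1 ha with h | ha'
      · subst h
        rcases Finset.mem_insert.1 hb with h' | hb'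
        · subst h'; exact Or.inl (hrefl _)
        · exact Or.inr (htrans b x _ (hcx b hb') hxy)
      · rcases Finset.mem_insert.1 hb with h' | hb'
        · subst h'; exact Or.inl (htrans a x _ (hcx a ha') hxy)
        · exact hcchain a ha' b hb'
  have h2 : (insert y c).card = c.card + 1 := Finset.card_insert_of_notMem hyc
  omega

lemma esPair {α : Type*} {M1 M2 : α → α → Prop}
    (h1 : IsLinearOrder α M1) (h2 : IsLinearOrder α M2)
    (S : Finset α) (m : ℕ) (hm : 1 ≤ m) (hS : m * m ≤ S.card) :
    ∃ T, T ⊆ S ∧ T.card = m ∧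
      ((∀ a ∈ T, ∀ b ∈ T, M1 a b → M2 a b) ∨ (∀ a ∈ T, ∀ b ∈ T, M1 a b → M2 b a)) := by
  classical
  have r1 : ∀ a, M1 a a := fun a => h1.refl a
  have r2 : ∀ a, M2 a a := fun a => h2.refl a
  have t1 : ∀ a b c, M1 a b → M1 b c → M1 a c := fun a b c => h1.trans a b c
  have t2 : ∀ a b c, M2 a b → M2 b c → M2 a c := fun a b c => h2.trans a b c
  have a1 : ∀ a b, M1 a b → M1 b a → a = b := fun a b => h1.antisymm a b
  have a2 : ∀ a b, M2 a b → M2 b a → a = b := fun a b => h2.antisymm a b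
  set Q : α → α → Prop := fun a b => M1 a b ∧ M2 a b with hQ
  set Q' : α → α → Prop := fun a b => M1 a b ∧ M2 b a with hQ'
  have Qrefl : ∀ a, Q a a := fun a => ⟨r1 a, r2 a⟩
  have Q'refl : ∀ a, Q' a a := fun a => ⟨r1 a, r2 a⟩
  have Qtrans : ∀ a b c, Q a b → Q b c → Q a c :=
    fun a b c h h' => ⟨t1 a b c h.1 h'.1, t2 a b c h.2 h'.2⟩
  have Q'trans : ∀ a b c, Q' a b → Q' b c → Q' a c :=
    fun a b c h h' => ⟨t1 a b c h.1 h'.1, t2 c b a h'.2 h.2⟩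
  have Qanti : ∀ a b, Q a b → Q b a → a = b := fun a b h h' => a1 a b h.1 h'.1
  have Q'anti : ∀ a b, Q' a b → Q' b a → a = b := fun a b h h' => a1 a b h.1 h'.1
  -- find a chain of size ≥ m in Q or Q'
  by_cases hch : ∃ c : Finset α, c ⊆ S ∧ m ≤ c.card ∧
      ((∀ a ∈ c, ∀ b ∈ c, Q a b ∨ Q b a) ∨ (∀ a ∈ c, ∀ b ∈ c, Q' a b ∨ Q' b a))
  · obtain ⟨c, hcS, hcm, hc⟩ := hch
    obtain ⟨T, hTc, hTcard⟩ := Finset.exists_subset_card_eq hcm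
    refine ⟨T, hTc.trans hcS, hTcard, ?_⟩
    rcases hc with hc | hc
    · left
      intro a ha b hb hab
      rcases hc a (hTc ha) b (hTc hb) with h | h
      · exact h.2
      · rcases a1 a b hab h.1 with rfl; exact r2 a
    · right
      intro a ha b hb hab
      rcases hc a (hTc ha) b (hTc hb) with h | h
      · exact h.2
      · rcases a1 a b hab h.1 with rfl; exact r2 a
  · exfalso
    push_neg at hch
    -- each chainVal is ≤ m-1
    have hQle : ∀ x, chainVal Q S x ≤ m - 1 := by
      intro x
      refine chainVal_le ?_
      intro c hcS hcchain
      by_contra h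
      obtain ⟨a, ha, b, hb, hnab, hnba⟩ := (hch c hcS (by omega)).1
      rcases hcchain a ha b hb with h' | h'
      · exact hnab h'
      · exact hnba h'
    have hQ'le : ∀ x, chainVal Q' S x ≤ m - 1 := by
      intro x
      refine chainVal_le ?_
      intro c hcS hcchain
      by_contra h
      obtain ⟨a, ha, b, hb, hnab, hnba⟩ := (hch c hcS (by omega)).2
      rcases hcchain a ha b hb with h' | h'
      · exact hnab h'
      · exact hnba h'
    -- injective map into Icc 1 (m-1) × Icc 1 (m-1)
    have hmaps : ∀ x ∈ S, (chainVal Q S x, chainVal Q' S x) ∈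
        Finset.Icc 1 (m-1) ×ˢ Finset.Icc 1 (m-1) := by
      intro x hx
      simp only [Finset.mem_product, Finset.mem_Icc]
      exact ⟨⟨chainVal_pos (Qrefl x) hx, hQle x⟩, ⟨chainVal_pos (Q'refl x) hx, hQ'le x⟩⟩
    have hinj : Set.InjOn (fun x => (chainVal Q S x, chainVal Q' S x)) S := by
      intro x hx y hy hxy
      by_contra hne
      have key : ∀ u v : α, u ∈ S → v ∈ S → u ≠ v → M1 u v →
          (chainVal Q S u, chainVal Q' S u) ≠ (chainVal Q S v, chainVal Q' S v) := by
        intro u v hu hv huv hM1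
        rcases h2.total u v with hM2 | hM2
        · have := chainVal_lt Qrefl Qtrans Qanti hu hv ⟨hM1, hM2⟩ huv
          intro h; apply absurd (congrArg Prod.fst h); simp; omega
        · have := chainVal_lt Q'refl Q'trans Q'anti hu hv ⟨hM1, hM2⟩ huv
          intro h; apply absurd (congrArg Prod.snd h); simp; omega
      rcases h1.total x y with hM1 | hM1
      · exact key x y hx hy hne hM1 hxy
      · exact key y x hy hx (Ne.symm hne) hM1 hxy.symm
    have hcard := Finset.card_le_card_of_injOn _ hmaps hinj
    have : (Finset.Icc 1 (m-1) ×ˢ Finset.Icc 1 (m-1)).card = (m-1) * (m-1) := by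
      simp [Finset.card_product, Nat.card_Icc]
    rw [this] at hcard
    obtain ⟨k, rfl⟩ : ∃ k, m = k + 1 := ⟨m - 1, by omega⟩
    simp only [Nat.add_sub_cancel] at hcard
    nlinarith

lemma middle3 {α : Type*} {M : α → α → Prop} (h : IsLinearOrder α M) (x y z : α)
    (hxy : x ≠ y) (hxz : x ≠ z) (hyz : y ≠ z) :
    ∃ a b c, (a = x ∨ a = y ∨ a = z) ∧ (b = x ∨ b = y ∨ b = z) ∧ (c = x ∨ c = y ∨ c = z) ∧
      a ≠ b ∧ a ≠ c ∧ b ≠ c ∧ M a b ∧ M b c := by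
  rcases h.total x y with h1 | h1
  · rcases h.total y z with h2 | h2
    · exact ⟨x, y, z, by tauto, by tauto, by tauto, hxy, hxz, hyz, h1, h2⟩
    · rcases h.total x z with h3 | h3
      · exact ⟨x, z, y, by tauto, by tauto, by tauto, hxz, hxy, hyz.symm, h3, h2⟩
      · exact ⟨z, x, y, by tauto, by tauto, by tauto, hxz.symm, hyz.symm, hxy, h3, h1⟩
  · rcases h.total x z with h2 | h2
    · exact ⟨y, x, z, by tauto, by tauto, by tauto, hxy.symm, hyz, hxz, h1, h2⟩
    · rcases h.total y z with h3 | h3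
      · exact ⟨y, z, x, by tauto, by tauto, by tauto, hyz, hxy.symm, hxz.symm, h3, h2⟩
      · exact ⟨z, y, x, by tauto, by tauto, by tauto, hyz.symm, hxz.symm, hxy.symm, h3, h1⟩

lemma triples {α : Type*} :
    ∀ (t : ℕ) (M : Fin (t+1) → α → α → Prop), (∀ i, IsLinearOrder α (M i)) →
    ∀ S : Finset α, 3 ^ 2 ^ t ≤ S.card →
    ∃ a ∈ S, ∃ b ∈ S, ∃ c ∈ S, a ≠ b ∧ a ≠ c ∧ b ≠ c ∧
      ∀ i, (M i a b ∧ M i b c) ∨ (M i c b ∧ M i b a) := by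
  intro t
  induction t with
  | zero =>
    intro M hM S hS
    classical
    simp only [pow_zero, pow_one] at hS
    obtain ⟨T, hTS, hT3⟩ := Finset.exists_subset_card_eq hS
    obtain ⟨x, y, z, hxy, hxz, hyz, rfl⟩ := Finset.card_eq_three.1 hT3
    have hx : x ∈ S := hTS (by simp)
    have hy : y ∈ S := hTS (by simp)
    have hz : z ∈ S := hTS (by simp)
    obtain ⟨a, b, c, ha, hb, hc, hab, hac, hbc, h1, h2⟩ := middle3 (hM 0) x y z hxy hxz hyz
    have hmem : ∀ w : α, (w = x ∨ w = y ∨ w = z) → w ∈ S := by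
      rintro w (rfl | rfl | rfl) <;> assumption
    refine ⟨a, hmem a ha, b, hmem b hb, c, hmem c hc, hab, hac, hbc, ?_⟩
    intro i
    have : i = 0 := Fin.ext (by omega)
    subst this
    exact Or.inl ⟨h1, h2⟩
  | succ t ih =>
    intro M hM S hS
    set m := 3 ^ 2 ^ t with hm
    have hm1 : 1 ≤ m := Nat.one_le_pow _ _ (by norm_num)
    have hmm : m * m ≤ S.card := by
      have : (3:ℕ) ^ 2 ^ (t+1) = m * m := by
        rw [hm, ← pow_add]
        congr 1
        rw [pow_succ]
        ring
      omega
    obtain ⟨T, hTS, hTcard, hmono⟩ :=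
      esPair (hM 0) (hM (Fin.last (t+1))) S m hm1 hmm
    obtain ⟨a, haT, b, hbT, c, hcT, hab, hac, hbc, hprop⟩ :=
      ih (fun j => M j.castSucc) (fun j => hM _) T (le_of_eq hTcard.symm)
    have h0 := hprop 0
    rw [Fin.castSucc_zero] at h0
    refine ⟨a, hTS haT, b, hTS hbT, c, hTS hcT, hab, hac, hbc, ?_⟩
    intro i
    rcases Fin.eq_castSucc_or_eq_last i with ⟨j, rfl⟩ | rfl
    · exact hprop j
    · rcases hmono with hmono | hmono
      · rcases h0 with ⟨p, q⟩ | ⟨p, q⟩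
        · exact Or.inl ⟨hmono a haT b hbT p, hmono b hbT c hcT q⟩
        · exact Or.inr ⟨hmono c hcT b hbT p, hmono b hbT a haT q⟩
      · rcases h0 with ⟨p, q⟩ | ⟨p, q⟩
        · exact Or.inr ⟨hmono b hbT c hcT q, hmono a haT b hbT p⟩
        · exact Or.inl ⟨hmono b hbT a haT q, hmono c hcT b hbT p⟩

open SimpleGraph

lemma incLE_refl' {V : Type*} (G : SimpleGraph V) : ∀ x, incLE G x x := by
  rintro (x | e)
  · exact rfl
  · exact rfl

lemma incLE_trans' {V : Type*} (G : SimpleGraph V) :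
    ∀ x y z, incLE G x y → incLE G y z → incLE G x z := by
  rintro (x | e) (y | f) (z | g) h1 h2
  · exact h1.trans h2
  · exact h1 ▸ h2
  · exact h2.elim
  · exact h2 ▸ h1
  · exact h1.elim
  · exact h1.elim
  · exact h2.elim
  · exact h1.trans h2

lemma incLE_antisymm' {V : Type*} (G : SimpleGraph V) :
    ∀ x y, incLE G x y → incLE G y x → x = y := by
  rintro (x | e) (y | f) h1 h2
  · exact congrArg Sum.inl h1
  · exact h2.elim
  · exact h1.elim
  · exact congrArg Sum.inr h1

lemma card_le_of_realizer {r t : ℕ}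
    {L : Fin (t+1) → IncGround (⊤ : SimpleGraph (Fin r)) →
      IncGround (⊤ : SimpleGraph (Fin r)) → Prop}
    (hL : IsRealizer (incLE (⊤ : SimpleGraph (Fin r))) L) : r ≤ 3 ^ 2 ^ t := by
  by_contra hcon
  push_neg at hcon
  set M : Fin (t+1) → Fin r → Fin r → Prop :=
    fun i x y => L i (Sum.inl x) (Sum.inl y) with hM
  have hMlin : ∀ i, IsLinearOrder (Fin r) (M i) := by
    intro i
    haveI := hL.1 i
    exact {
      refl := fun a => (hL.1 i).refl _
      trans := fun a b c h1 h2 => (hL.1 i).trans _ _ _ h1 h2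
      antisymm := fun a b h1 h2 => Sum.inl.inj ((hL.1 i).antisymm _ _ h1 h2)
      total := fun a b => (hL.1 i).total _ _ }
  obtain ⟨a, _, b, _, c, _, hab, hac, hbc, hprop⟩ :=
    triples t M hMlin Finset.univ (by simpa using le_of_lt hcon)
  have he : s(a, c) ∈ (⊤ : SimpleGraph (Fin r)).edgeSet := by
    rw [SimpleGraph.mem_edgeSet]
    exact hac
  set e : (⊤ : SimpleGraph (Fin r)).edgeSet := ⟨s(a, c), he⟩ with heq
  have hble : ¬ incLE (⊤ : SimpleGraph (Fin r)) (Sum.inl b) (Sum.inr e) := by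
    show ¬ b ∈ (e : Sym2 (Fin r))
    rw [heq]
    simp only [Sym2.mem_iff]
    rintro (rfl | rfl)
    · exact hab rfl
    · exact hbc rfl
  have : ¬ ∀ i, L i (Sum.inl b) (Sum.inr e) := fun h => hble ((hL.2 _ _).2 h)
  push_neg at this
  obtain ⟨i, hi⟩ := this
  have hieb : L i (Sum.inr e) (Sum.inl b) := by
    rcases (hL.1 i).total (Sum.inl b) (Sum.inr e) with h | h
    · exact absurd h hi
    · exact h
  have hale : incLE (⊤ : SimpleGraph (Fin r)) (Sum.inl a) (Sum.inr e) := by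
    show a ∈ (e : Sym2 (Fin r))
    rw [heq]
    exact Sym2.mem_mk_left a c
  have hcle : incLE (⊤ : SimpleGraph (Fin r)) (Sum.inl c) (Sum.inr e) := by
    show c ∈ (e : Sym2 (Fin r))
    rw [heq]
    exact Sym2.mem_mk_right a c
  have hMab : M i a b := (hL.1 i).trans _ _ _ ((hL.2 _ _).1 hale i) hieb
  have hMcb : M i c b := (hL.1 i).trans _ _ _ ((hL.2 _ _).1 hcle i) hieb
  rcases hprop i with ⟨h1, h2⟩ | ⟨h1, h2⟩
  · exact hbc (Sum.inl.inj ((hL.1 i).antisymm _ _ h2 hMcb))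
  · exact hab (Sum.inl.inj ((hL.1 i).antisymm _ _ hMab h2))

lemma exists_realizer_s11 {α : Type*} [Finite α] (le : α → α → Prop)
    (hrefl : ∀ x, le x x) (htrans : ∀ x y z, le x y → le y z → le x z)
    (hanti : ∀ x y, le x y → le y x → x = y) :
    ∃ t : ℕ, 0 < t ∧ ∃ L : Fin t → α → α → Prop, IsRealizer le L := by
  classical
  haveI hpo : IsPartialOrder α le :=
    { refl := hrefl, trans := htrans, antisymm := hanti }
  obtain ⟨s0, hs0, hles0⟩ := extend_partialOrder le
  have key : ∀ x y : α, ∃ L' : α → α → Prop,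
      IsLinearOrder α L' ∧ (∀ a b, le a b → L' a b) ∧ (¬ le x y → ¬ L' x y) := by
    intro x y
    by_cases h : le x y
    · exact ⟨s0, hs0, fun a b hab => hles0 a b hab, fun h' => absurd h h'⟩
    · have hxy : x ≠ y := fun hxy => h (hxy ▸ hrefl x)
      set s' : α → α → Prop := fun a b => le a b ∨ (le a y ∧ le x b) with hs'
      haveI : IsPartialOrder α s' :=
        { refl := fun a => Or.inl (hrefl a)
          trans := by
            rintro a b c (hab | ⟨hay, hxb⟩) (hbc | ⟨hby, hxc⟩)
            · exact Or.inl (htrans _ _ _ hab hbc)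
            · exact Or.inr ⟨htrans _ _ _ hab hby, hxc⟩
            · exact Or.inr ⟨hay, htrans _ _ _ hxb hbc⟩
            · exact Or.inr ⟨hay, hxc⟩
          antisymm := by
            rintro a b (hab | ⟨hay, hxb⟩) (hba | ⟨hby, hxa⟩)
            · exact hanti _ _ hab hba
            · exact absurd (htrans _ _ _ hxa (htrans _ _ _ hab hby)) h
            · exact absurd (htrans _ _ _ (htrans _ _ _ hxb hba) hay) h
            · exact absurd (htrans _ _ _ hxa hay) h }
      obtain ⟨s, hs, hle⟩ := extend_partialOrder s'
      refine ⟨s, hs, fun a b hab => hle a b (Or.inl hab), fun _ hsxy => ?_⟩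
      have hsyx : s y x := hle y x (Or.inr ⟨hrefl y, hrefl x⟩)
      exact hxy (hs.antisymm _ _ hsxy hsyx)
  choose F hF1 hF2 hF3 using key
  obtain ⟨n, ⟨eq⟩⟩ := Finite.exists_equiv_fin (α × α)
  refine ⟨n + 1, Nat.succ_pos n, fun i =>
    if h : (i : ℕ) < n then F (eq.symm ⟨i, h⟩).1 (eq.symm ⟨i, h⟩).2 else s0, ?_, ?_⟩
  · intro i
    rcases Nat.lt_or_ge (i : ℕ) n with h | h
    · simp only [dif_pos h]
      exact hF1 _ _
    · simp only [dif_neg (Nat.not_lt.2 h)]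
      exact hs0
  · intro x y
    constructor
    · intro hxy i
      rcases Nat.lt_or_ge (i : ℕ) n with h | h
      · simp only [dif_pos h]
        exact hF2 _ _ _ _ hxy
      · simp only [dif_neg (Nat.not_lt.2 h)]
        exact hles0 x y hxy
    · intro hall
      by_contra hne
      have hlt : ((eq (x, y)).castSucc : ℕ) < n := (eq (x, y)).isLt
      have := hall (eq (x, y)).castSucc
      simp only [dif_pos hlt] at this
      have heq2 : eq.symm ⟨((eq (x, y)).castSucc : ℕ), hlt⟩ = (x, y) := by
        have : (⟨((eq (x, y)).castSucc : ℕ), hlt⟩ : Fin n) = eq (x, y) := Fin.ext rfl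
        rw [this, Equiv.symm_apply_apply]
      rw [heq2] at this
      exact hF3 x y hne this

/-- The dimension of the incidence poset of the complete graph `K_r` is at least `lg lg r`. -/
theorem stmt_11 (r : ℕ) :
    Real.logb 2 (Real.logb 2 r) ≤ (incDim (⊤ : SimpleGraph (Fin r)) : ℝ) := by
  have hfin : Finite (IncGround (⊤ : SimpleGraph (Fin r))) := by
    unfold IncGround
    infer_instance
  obtain ⟨t0, ht0, L0, hL0⟩ := exists_realizer_s11 (incLE (⊤ : SimpleGraph (Fin r)))
    (incLE_refl' _) (incLE_trans' _) (incLE_antisymm' _)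
  have hne : {t | 0 < t ∧ ∃ L : Fin t → IncGround (⊤ : SimpleGraph (Fin r)) →
      IncGround (⊤ : SimpleGraph (Fin r)) → Prop,
      IsRealizer (incLE (⊤ : SimpleGraph (Fin r))) L}.Nonempty := ⟨t0, ht0, L0, hL0⟩
  have hmem : incDim (⊤ : SimpleGraph (Fin r)) ∈ {t | 0 < t ∧
      ∃ L : Fin t → IncGround (⊤ : SimpleGraph (Fin r)) →
        IncGround (⊤ : SimpleGraph (Fin r)) → Prop,
      IsRealizer (incLE (⊤ : SimpleGraph (Fin r))) L} := Nat.sInf_mem hne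
  obtain ⟨hdpos, L, hL⟩ := hmem
  obtain ⟨t, hdt⟩ : ∃ t, incDim (⊤ : SimpleGraph (Fin r)) = t + 1 :=
    ⟨incDim (⊤ : SimpleGraph (Fin r)) - 1, by omega⟩
  rw [hdt]
  have hL2 : ∃ L : Fin (t+1) → IncGround (⊤ : SimpleGraph (Fin r)) →
      IncGround (⊤ : SimpleGraph (Fin r)) → Prop,
      IsRealizer (incLE (⊤ : SimpleGraph (Fin r))) L := by
    rw [← hdt]; exact ⟨L, hL⟩
  obtain ⟨L2, hL2⟩ := hL2
  have hr : r ≤ 3 ^ 2 ^ t := card_le_of_realizer hL2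
  have hr2 : r ≤ 2 ^ 2 ^ (t + 1) := by
    calc r ≤ 3 ^ 2 ^ t := hr
    _ ≤ 4 ^ 2 ^ t := Nat.pow_le_pow_left (by norm_num) _
    _ = 2 ^ 2 ^ (t + 1) := by
        rw [show (4:ℕ) = 2 ^ 2 by norm_num, ← pow_mul, pow_succ]
        ring_nf
  -- now the real-number computation
  rcases le_or_gt (r : ℝ) 1 with hr1 | hr1
  · have hr1' : r ≤ 1 := by exact_mod_cast hr1
    interval_cases r
    · simp only [Nat.cast_zero, Real.logb_zero]
      positivity
    · simp only [Nat.cast_one, Real.logb_one, Real.logb_zero]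
      positivity
  · have hrpos : (0:ℝ) < r := by linarith
    have hcast : (r : ℝ) ≤ (2:ℝ) ^ ((2:ℕ) ^ (t+1) : ℕ) := by
      have := hr2
      calc (r:ℝ) ≤ ((2 ^ 2 ^ (t+1) : ℕ) : ℝ) := by exact_mod_cast hr2
      _ = (2:ℝ) ^ ((2:ℕ) ^ (t+1) : ℕ) := by push_cast; ring
    have hlog1 : Real.logb 2 (r:ℝ) ≤ ((2:ℕ) ^ (t+1) : ℕ) := by
      calc Real.logb 2 (r:ℝ) ≤ Real.logb 2 ((2:ℝ) ^ ((2:ℕ) ^ (t+1) : ℕ)) :=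
            Real.logb_le_logb_of_le (by norm_num) hrpos hcast
      _ = ((2:ℕ) ^ (t+1) : ℕ) := by
            rw [Real.logb_pow, Real.logb_self_eq_one (by norm_num)]
            ring
    have hlogpos : 0 < Real.logb 2 (r:ℝ) := by
      have h12 : (1:ℝ) < r := hr1
      exact Real.logb_pos (by norm_num) h12
    calc Real.logb 2 (Real.logb 2 (r:ℝ))
        ≤ Real.logb 2 (((2:ℕ) ^ (t+1) : ℕ) : ℝ) :=
          Real.logb_le_logb_of_le (by norm_num) hlogpos hlog1
      _ = Real.logb 2 ((2:ℝ) ^ (t+1 : ℕ)) := by push_cast; ring_nf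
      _ = ((t:ℝ) + 1) := by
          rw [Real.logb_pow, Real.logb_self_eq_one (by norm_num)]
          push_cast
          ring
      _ ≤ ((t + 1 : ℕ) : ℝ) := by push_cast; exact le_refl _
end

section
/- Let S_n be the shift graph whose vertices are the 2-element subsets {i,j} of {1,...,n} with i < j, and with {i,j} adjacent to {j,k} whenever 1 ≤ i < j < k ≤ n. Then χ(S_n) = ⌈lg n⌉, where lg is the base-2 logarithm. -/
open SimpleGraph

/-- Vertices of the shift graph: pairs `{i,j} ⊆ {1,…,n}` with `i < j`. -/
def ShiftVert (n : ℕ) := {p : Fin n × Fin n // p.1 < p.2}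

/-- The shift graph `S_n`: `{i,j}` is adjacent to `{j,k}` whenever `i < j < k`. -/
def shiftGraph (n : ℕ) : SimpleGraph (ShiftVert n) where
  Adj a b := a.1.2 = b.1.1 ∨ b.1.2 = a.1.1
  symm := ⟨by intro a b h; tauto⟩
  loopless := ⟨by
    intro a h
    rcases h with h | h <;> exact absurd (h ▸ a.2) (lt_irrefl _)⟩

/-! ### Auxiliary lemmas -/

lemma testBit_log_self {x : ℕ} (hx : x ≠ 0) : x.testBit (Nat.log 2 x) = true := by
  have h1 : 2 ^ Nat.log 2 x ≤ x := Nat.pow_log_le_self 2 hx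
  have h2 : x < 2 ^ (Nat.log 2 x + 1) := Nat.lt_pow_succ_log_self one_lt_two x
  have hpos : 0 < 2 ^ Nat.log 2 x := by positivity
  have hdiv : x / 2 ^ Nat.log 2 x = 1 := by
    have hle : 1 ≤ x / 2 ^ Nat.log 2 x := (Nat.one_le_div_iff hpos).mpr h1
    have hlt : x / 2 ^ Nat.log 2 x < 2 := by
      rw [Nat.div_lt_iff_lt_mul hpos]
      calc x < 2 ^ (Nat.log 2 x + 1) := h2
        _ = 2 * 2 ^ Nat.log 2 x := by ring
    omega
  rw [Nat.testBit_eq_decide_div_mod_eq, hdiv]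
  decide

lemma testBit_high {i j : ℕ} (hij : i < j) :
    j.testBit (Nat.log 2 (i ^^^ j)) = true ∧ i.testBit (Nat.log 2 (i ^^^ j)) = false := by
  set p := Nat.log 2 (i ^^^ j) with hp
  have hx : i ^^^ j ≠ 0 := by
    intro h
    exact absurd (xor_eq_zero_iff.mp h) hij.ne
  have hbit : (i ^^^ j).testBit p = true := testBit_log_self hx
  rw [Nat.testBit_xor] at hbit
  have hhigh : ∀ q, p < q → j.testBit q = i.testBit q := by
    intro q hq
    have hlt : i ^^^ j < 2 ^ q :=
      lt_of_lt_of_le (Nat.lt_pow_succ_log_self one_lt_two _)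
        (Nat.pow_le_pow_right (by norm_num) hq)
    have := Nat.testBit_eq_false_of_lt hlt
    rw [Nat.testBit_xor] at this
    rcases Bool.eq_false_or_eq_true (j.testBit q) with h1 | h1 <;>
      rcases Bool.eq_false_or_eq_true (i.testBit q) with h2 | h2 <;>
        simp_all
  rcases Bool.eq_false_or_eq_true (j.testBit p) with hj | hj
  · refine ⟨hj, ?_⟩
    rcases Bool.eq_false_or_eq_true (i.testBit p) with h | h
    · rw [hj, h] at hbit; simp at hbit
    · exact h
  · exfalso
    have hi : i.testBit p = true := by
      rcases Bool.eq_false_or_eq_true (i.testBit p) with h | h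
      · exact h
      · rw [hj, h] at hbit; simp at hbit
    have : j < i := Nat.lt_of_testBit p hj hi (fun q hq => hhigh q hq)
    omega

/-- the proper coloring of the shift graph by the highest differing bit. -/
def shiftColoring (n : ℕ) : (shiftGraph n).Coloring (Fin (Nat.clog 2 n)) :=
  SimpleGraph.Coloring.mk
    (fun v => ⟨Nat.log 2 (v.1.1.val ^^^ v.1.2.val), by
      have hij : v.1.1.val < v.1.2.val := v.2
      have hx : v.1.1.val ^^^ v.1.2.val ≠ 0 := by
        intro h
        exact absurd (xor_eq_zero_iff.mp h) hij.ne
      have hn : (n : ℕ) ≤ 2 ^ Nat.clog 2 n := Nat.le_pow_clog one_lt_two n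
      have h1 : v.1.1.val < 2 ^ Nat.clog 2 n := lt_of_lt_of_le v.1.1.isLt hn
      have h2 : v.1.2.val < 2 ^ Nat.clog 2 n := lt_of_lt_of_le v.1.2.isLt hn
      have hxor : v.1.1.val ^^^ v.1.2.val < 2 ^ Nat.clog 2 n := Nat.xor_lt_two_pow h1 h2
      exact Nat.log_lt_of_lt_pow hx hxor⟩)
    (by
      rintro v w hadj hcw
      have hv : v.1.1.val < v.1.2.val := v.2
      have hw : w.1.1.val < w.1.2.val := w.2
      have heq : Nat.log 2 (v.1.1.val ^^^ v.1.2.val) = Nat.log 2 (w.1.1.val ^^^ w.1.2.val) := by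
        simpa [Fin.ext_iff] using hcw
      rcases hadj with h | h
      · -- v.1.2 = w.1.1
        have h' : v.1.2.val = w.1.1.val := by rw [h]
        have h1 := (testBit_high hv).1
        have h2 := (testBit_high hw).2
        rw [heq, h'] at h1
        rw [h1] at h2
        simp at h2
      · -- w.1.2 = v.1.1
        have h' : w.1.2.val = v.1.1.val := by rw [h]
        have h1 := (testBit_high hw).1
        have h2 := (testBit_high hv).2
        rw [heq, ← h'] at h2
        rw [h1] at h2
        simp at h2)

open Classical in
lemma shift_lower_bound {n m : ℕ} (hc : (shiftGraph n).Colorable m) : Nat.clog 2 n ≤ m := by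
  obtain ⟨C⟩ := hc
  -- map each j to the set of colors of edges {i, j} with i < j
  set F : Fin n → Finset (Fin m) := fun j =>
    Finset.univ.filter (fun col => ∃ i : Fin n, ∃ h : i < j, C ⟨(i, j), h⟩ = col) with hF
  have hinj : Function.Injective F := by
    have key : ∀ j k : Fin n, j < k → F j ≠ F k := by
      intro j k hjk heq
      have hmem : C ⟨(j, k), hjk⟩ ∈ F k := by
        simp only [hF, Finset.mem_filter, Finset.mem_univ, true_and]
        exact ⟨j, hjk, rfl⟩
      rw [← heq] at hmem
      simp only [hF, Finset.mem_filter, Finset.mem_univ, true_and] at hmem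
      obtain ⟨i, hij, hcol⟩ := hmem
      have hadj : (shiftGraph n).Adj ⟨(i, j), hij⟩ ⟨(j, k), hjk⟩ := Or.inl rfl
      exact C.valid hadj hcol
    intro j k heq
    by_contra hne
    rcases lt_or_gt_of_ne hne with h | h
    · exact key j k h heq
    · exact key k j h heq.symm
  have hcard : n ≤ 2 ^ m := by
    have := Fintype.card_le_of_injective F hinj
    simpa [Fintype.card_finset] using this
  exact (Nat.clog_le_iff_le_pow one_lt_two).mpr hcard

/-- The chromatic number of the shift graph `S_n` is `⌈lg n⌉`. -/
theorem stmt_12 (n : ℕ) :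
    (shiftGraph n).chromaticNumber = ((⌈Real.logb 2 n⌉₊ : ℕ) : ℕ∞) := by
  have hceil : ⌈Real.logb 2 n⌉₊ = Nat.clog 2 n := by
    have h2 : Real.logb 2 (n : ℝ) = Real.logb ((2 : ℕ) : ℝ) (n : ℝ) := by norm_num
    rw [h2, ← Int.ceil_toNat, Real.ceil_logb_natCast (Nat.cast_nonneg n),
      Int.clog_natCast, Int.toNat_natCast]
  rw [hceil]
  have hcol : (shiftGraph n).Colorable (Nat.clog 2 n) := ⟨shiftColoring n⟩
  rw [hcol.chromaticNumber_eq_sInf]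
  congr 1
  apply le_antisymm
  · exact Nat.sInf_le hcol
  · exact shift_lower_bound (Nat.sInf_mem (⟨_, hcol⟩ : {n' | (shiftGraph n).Colorable n'}.Nonempty))
end

section
/- For any graph G, the least t for which there exist linear orders L_1,...,L_t on V(G) satisfying: for all distinct vertices x, y, z with {y,z} an edge there is some i with x > y and x > z in L_i, is at least dim(P_G) − 1 and at most dim(P_G). -/
open SimpleGraph

/-- Pullback of a lex-like order along a "pair-injective" pair of keys is linear. -/
lemma keyRel_linear {α β : Type*} {L : β → β → Prop} (hL : IsLinearOrder β L)
    (k : α → β) (n : α → ℕ) (hinj : ∀ a b, k a = k b → n a = n b → a = b) :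
    IsLinearOrder α (fun a b => (L (k a) (k b) ∧ k a ≠ k b) ∨ (k a = k b ∧ n a ≤ n b)) := by
  haveI := hL
  refine { refl := fun a => Or.inr ⟨rfl, le_refl _⟩, trans := ?_, antisymm := ?_, total := ?_ }
  · rintro a b c (⟨h1, h2⟩ | ⟨h1, h2⟩) (⟨h3, h4⟩ | ⟨h3, h4⟩)
    · refine Or.inl ⟨trans_of L h1 h3, fun he => ?_⟩
      exact h2 (antisymm_of L h1 (he ▸ h3))
    · exact Or.inl ⟨h3 ▸ h1, h3 ▸ h2⟩
    · exact Or.inl ⟨h1 ▸ h3, h1 ▸ h4⟩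
    · exact Or.inr ⟨h1.trans h3, h2.trans h4⟩
  · rintro a b (⟨h1, h2⟩ | ⟨h1, h2⟩) (⟨h3, h4⟩ | ⟨h3, h4⟩)
    · exact absurd (antisymm_of L h1 h3) h2
    · exact absurd h3.symm h2
    · exact absurd h1.symm h4
    · exact hinj a b h1 (le_antisymm h2 h4)
  · intro a b
    by_cases hk : k a = k b
    · rcases Nat.le_total (n a) (n b) with h | h
      · exact Or.inl (Or.inr ⟨hk, h⟩)
      · exact Or.inr (Or.inr ⟨hk.symm, h⟩)
    · rcases total_of L (k a) (k b) with h | h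
      · exact Or.inl (Or.inl ⟨h, hk⟩)
      · exact Or.inr (Or.inl ⟨h, Ne.symm hk⟩)


open scoped Classical in
noncomputable def mxE {V : Type*} (L1 : V → V → Prop) (e : Sym2 V) : V :=
  if L1 e.out.1 e.out.2 then e.out.2 else e.out.1

lemma mxE_mem {V : Type*} (L1 : V → V → Prop) (e : Sym2 V) :
    mxE L1 e = e.out.1 ∨ mxE L1 e = e.out.2 := by
  unfold mxE; split <;> simp

lemma mem_out {V : Type*} {e : Sym2 V} {x : V} (hx : x ∈ e) : x = e.out.1 ∨ x = e.out.2 := by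
  rw [← e.out_eq] at hx
  exact Sym2.mem_iff.1 hx

lemma le_mxE {V : Type*} {L1 : V → V → Prop} (hL : IsLinearOrder V L1) {e : Sym2 V} {x : V}
    (hx : x ∈ e) : L1 x (mxE L1 e) := by
  haveI := hL
  rcases mem_out hx with h | h <;> subst h <;> unfold mxE <;> split <;>
    first
      | exact refl_of L1 _
      | assumption
      | exact (total_of L1 _ _).resolve_left ‹_›


section Construction

variable {V : Type*} {G : SimpleGraph V}

noncomputable def kfun (G : SimpleGraph V) (L1 : V → V → Prop) : IncGround G → V :=
  Sum.elim id (fun e => mxE L1 (e : Sym2 V))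

def nfun (G : SimpleGraph V) (ι : G.edgeSet → ℕ) : IncGround G → ℕ :=
  Sum.elim (fun _ => 0) (fun e => ι e + 1)

noncomputable def Mrel (G : SimpleGraph V) (L1 : V → V → Prop) (ι : G.edgeSet → ℕ)
    (a b : IncGround G) : Prop :=
  (L1 (kfun G L1 a) (kfun G L1 b) ∧ kfun G L1 a ≠ kfun G L1 b) ∨
    (kfun G L1 a = kfun G L1 b ∧ nfun G ι a ≤ nfun G ι b)

noncomputable def Mrel' (G : SimpleGraph V) (L1 : V → V → Prop) (ι : G.edgeSet → ℕ) :
    IncGround G → IncGround G → Prop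
  | Sum.inl x, Sum.inl y => L1 y x
  | Sum.inl _, Sum.inr _ => True
  | Sum.inr _, Sum.inl _ => False
  | Sum.inr e, Sum.inr f => Mrel G L1 ι (Sum.inr f) (Sum.inr e)

lemma kn_inj (L1 : V → V → Prop) {ι : G.edgeSet → ℕ} (hι : Function.Injective ι) :
    ∀ a b : IncGround G, kfun G L1 a = kfun G L1 b → nfun G ι a = nfun G ι b → a = b := by
  intro a b
  rcases a with x | e <;> rcases b with y | f
  · intro h _; exact congrArg Sum.inl h
  · intro _ h; simp [nfun] at h
  · intro _ h; simp [nfun] at h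
  · intro _ h
    simp only [nfun, Sum.elim_inr, Nat.add_right_cancel_iff] at h
    exact congrArg Sum.inr (hι h)

lemma Mrel_linear {L1 : V → V → Prop} {ι : G.edgeSet → ℕ}
    (hL : IsLinearOrder V L1) (hι : Function.Injective ι) :
    IsLinearOrder (IncGround G) (Mrel G L1 ι) :=
  keyRel_linear hL (kfun G L1) (nfun G ι) (kn_inj L1 hι)

lemma Mrel'_linear {L1 : V → V → Prop} {ι : G.edgeSet → ℕ}
    (hL : IsLinearOrder V L1) (hι : Function.Injective ι) :
    IsLinearOrder (IncGround G) (Mrel' G L1 ι) := by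
  haveI := hL
  haveI hM := Mrel_linear (G := G) hL hι
  refine { refl := ?_, trans := ?_, antisymm := ?_, total := ?_ }
  · rintro (x | e) <;> simp only [Mrel'] <;>
      first
        | exact refl_of L1 _
        | exact refl_of (Mrel G L1 ι) _
  · rintro (x | e) (y | f) (z | g) <;> simp only [Mrel'] <;> intro h1 h2 <;>
      first
        | trivial
        | exact h1.elim
        | exact h2.elim
        | exact trans_of L1 h2 h1
        | exact trans_of (Mrel G L1 ι) h2 h1
  · rintro (x | e) (y | f) <;> simp only [Mrel'] <;> intro h1 h2 <;>
      first
        | exact h1.elim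
        | exact h2.elim
        | exact antisymm_of L1 h2 h1
        | exact congrArg Sum.inl (antisymm_of L1 h2 h1)
        | exact antisymm_of (Mrel G L1 ι) h2 h1
  · rintro (x | e) (y | f) <;> simp only [Mrel'] <;>
      first
        | exact total_of L1 _ _
        | exact Or.inl trivial
        | exact Or.inr trivial
        | exact total_of (Mrel G L1 ι) _ _

lemma Mrel_ext {L1 : V → V → Prop} {ι : G.edgeSet → ℕ} (hL : IsLinearOrder V L1) :
    ∀ a b, incLE G a b → Mrel G L1 ι a b := by
  haveI := hL
  rintro (x | e) (y | f) h
  · have hxy : x = y := h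
    subst hxy
    exact Or.inr ⟨rfl, le_refl _⟩
  · have hx : x ∈ (f : Sym2 V) := h
    by_cases hxm : x = mxE L1 (f : Sym2 V)
    · exact Or.inr ⟨hxm, Nat.zero_le _⟩
    · exact Or.inl ⟨le_mxE hL hx, hxm⟩
  · exact (h : False).elim
  · have hef : e = f := h
    subst hef
    exact Or.inr ⟨rfl, le_refl _⟩

lemma Mrel'_ext {L1 : V → V → Prop} {ι : G.edgeSet → ℕ} (hL : IsLinearOrder V L1) :
    ∀ a b, incLE G a b → Mrel' G L1 ι a b := by
  haveI := hL
  rintro (x | e) (y | f) h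
  · have hxy : x = y := h
    subst hxy
    simp only [Mrel']
    exact refl_of L1 x
  · simp only [Mrel']
  · exact (h : False).elim
  · have hef : e = f := h
    subst hef
    simp only [Mrel']
    exact Or.inr ⟨rfl, le_refl _⟩

lemma adj_out {e : G.edgeSet} : G.Adj (e : Sym2 V).out.1 (e : Sym2 V).out.2 := by
  have h := e.2
  rw [← Quot.out_eq (e : Sym2 V)] at h
  exact h

lemma out_fst_mem {e : G.edgeSet} : (e : Sym2 V).out.1 ∈ (e : Sym2 V) :=
  Sym2.out_fst_mem _

lemma out_snd_mem {e : G.edgeSet} : (e : Sym2 V).out.2 ∈ (e : Sym2 V) :=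
  Sym2.out_snd_mem _

lemma down [Fintype V] (G : SimpleGraph V) {t : ℕ} (ht : 0 < t)
    {L : Fin t → V → V → Prop} (hlin : ∀ i, IsLinearOrder V (L i))
    (hcov : ∀ x y z : V, x ≠ y → x ≠ z → y ≠ z → G.Adj y z → ∃ i, L i y x ∧ L i z x) :
    ∃ M : Fin (t + 1) → IncGround G → IncGround G → Prop, IsRealizer (incLE G) M := by
  classical
  obtain ⟨ι, hι⟩ := exists_injective_nat G.edgeSet
  refine ⟨fun j => if h : (j : ℕ) < t then Mrel G (L ⟨j, h⟩) ι else Mrel' G (L ⟨0, ht⟩) ι, ?_, ?_⟩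
  · intro j
    by_cases h : (j : ℕ) < t
    · simp only [dif_pos h]; exact Mrel_linear (hlin _) hι
    · simp only [dif_neg h]; exact Mrel'_linear (hlin _) hι
  · intro a b
    constructor
    · intro hab j
      by_cases h : (j : ℕ) < t
      · simp only [dif_pos h]; exact Mrel_ext (hlin _) a b hab
      · simp only [dif_neg h]; exact Mrel'_ext (hlin _) a b hab
    · intro hall
      have h0 : Mrel G (L ⟨0, ht⟩) ι a b := by
        have h := hall ⟨0, by omega⟩
        simpa only [dif_pos ht] using h
      have hlast : Mrel' G (L ⟨0, ht⟩) ι a b := by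
        have h := hall ⟨t, by omega⟩
        simpa only [dif_neg (lt_irrefl t)] using h
      haveI := hlin ⟨0, ht⟩
      rcases a with x | e <;> rcases b with y | f
      · show x = y
        simp only [Mrel'] at hlast
        rcases h0 with ⟨h1, h2⟩ | ⟨h1, h2⟩
        · exact absurd (antisymm_of (L ⟨0, ht⟩) h1 hlast) h2
        · exact h1
      · show x ∈ (f : Sym2 V)
        by_contra hx
        have hadj : G.Adj (f : Sym2 V).out.1 (f : Sym2 V).out.2 := adj_out
        have hxy : x ≠ (f : Sym2 V).out.1 := fun h => hx (h ▸ out_fst_mem)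
        have hxz : x ≠ (f : Sym2 V).out.2 := fun h => hx (h ▸ out_snd_mem)
        obtain ⟨i, hyx, hzx⟩ := hcov x _ _ hxy hxz hadj.ne hadj
        have hi : Mrel G (L i) ι (Sum.inl x) (Sum.inr f) := by
          have h := hall ⟨(i : ℕ), by omega⟩
          simp only [dif_pos i.2] at h
          exact h
        haveI := hlin i
        have hLx : L i (mxE (L i) (f : Sym2 V)) x := by
          rcases mxE_mem (L i) (f : Sym2 V) with h | h
          · rw [h]; exact hyx
          · rw [h]; exact hzx
        have hxm : x ≠ mxE (L i) (f : Sym2 V) := by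
          rcases mxE_mem (L i) (f : Sym2 V) with h | h
          · rw [h]; exact hxy
          · rw [h]; exact hxz
        rcases hi with ⟨h1, h2⟩ | ⟨h1, h2⟩
        · exact h2 (antisymm_of (L i) h1 hLx)
        · exact hxm h1
      · simp only [Mrel'] at hlast
      · show e = f
        simp only [Mrel'] at hlast
        rcases h0 with ⟨h1, h2⟩ | ⟨h1, h2⟩ <;> rcases hlast with ⟨h3, h4⟩ | ⟨h3, h4⟩
        · exact absurd (antisymm_of (L ⟨0, ht⟩) h1 h3) h2
        · exact absurd h3.symm h2
        · exact absurd h1.symm h4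
        · have h2' : ι e + 1 ≤ ι f + 1 := h2
          have h4' : ι f + 1 ≤ ι e + 1 := h4
          exact hι (by omega)

lemma up (G : SimpleGraph V) {t : ℕ}
    {M : Fin t → IncGround G → IncGround G → Prop} (hM : IsRealizer (incLE G) M) :
    ∃ L : Fin t → V → V → Prop, (∀ i, IsLinearOrder V (L i)) ∧
      (∀ x y z : V, x ≠ y → x ≠ z → y ≠ z → G.Adj y z → ∃ i, L i y x ∧ L i z x) := by
  obtain ⟨hlin, hiff⟩ := hM
  refine ⟨fun i x y => M i (Sum.inl x) (Sum.inl y), ?_, ?_⟩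
  · intro i
    haveI := hlin i
    exact { refl := fun x => refl_of (M i) _,
            trans := fun x y z h1 h2 => trans_of (M i) h1 h2,
            antisymm := fun x y h1 h2 => Sum.inl.inj (antisymm_of (M i) h1 h2),
            total := fun x y => total_of (M i) _ _ }
  · intro x y z hxy hxz hyz hadj
    have he : s(y, z) ∈ G.edgeSet := hadj
    set e : G.edgeSet := ⟨s(y, z), he⟩ with hedef
    have hne : ¬ incLE G (Sum.inl x) (Sum.inr e) := by
      show ¬ x ∈ (e : Sym2 V)
      rw [hedef]
      intro h
      rcases Sym2.mem_iff.1 h with h | h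
      · exact hxy h
      · exact hxz h
    have hnall : ¬ ∀ i, M i (Sum.inl x) (Sum.inr e) := fun h => hne ((hiff _ _).2 h)
    push_neg at hnall
    obtain ⟨i, hi⟩ := hnall
    haveI := hlin i
    have hex : M i (Sum.inr e) (Sum.inl x) := (total_of (M i) _ _).resolve_left hi
    have hy : M i (Sum.inl y) (Sum.inr e) :=
      (hiff (Sum.inl y) (Sum.inr e)).1 (Sym2.mem_mk_left y z) i
    have hz : M i (Sum.inl z) (Sum.inr e) :=
      (hiff (Sum.inl z) (Sum.inr e)).1 (Sym2.mem_mk_right y z) i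
    exact ⟨i, trans_of (M i) hy hex, trans_of (M i) hz hex⟩

lemma exists_family (V : Type*) [Fintype V] (G : SimpleGraph V) :
    ∃ L : Fin (Fintype.card V + 1) → V → V → Prop, (∀ i, IsLinearOrder V (L i)) ∧
      (∀ x y z : V, x ≠ y → x ≠ z → y ≠ z → G.Adj y z → ∃ i, L i y x ∧ L i z x) := by
  classical
  set n := Fintype.card V with hn
  set eqv := Fintype.equivFin V with heqv
  set base : V → V → Prop := fun x y => eqv x ≤ eqv y with hbase
  have hbaselin : IsLinearOrder V base :=
    { refl := fun x => le_refl _, trans := fun _ _ _ h1 h2 => le_trans h1 h2,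
      antisymm := fun x y h1 h2 => eqv.injective (le_antisymm h1 h2),
      total := fun x y => le_total _ _ }
  have htoplin : ∀ v : V, IsLinearOrder V (fun x y => y = v ∨ (x ≠ v ∧ base x y)) := by
    intro v
    refine { refl := ?_, trans := ?_, antisymm := ?_, total := ?_ }
    · intro x
      by_cases h : x = v
      · exact Or.inl h
      · exact Or.inr ⟨h, le_refl _⟩
    · rintro x y z h1 (h2 | ⟨h2, h3⟩)
      · exact Or.inl h2
      · rcases h1 with h1 | ⟨h1, h4⟩
        · exact absurd h1 h2
        · exact Or.inr ⟨h1, le_trans h4 h3⟩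
    · rintro x y (h1 | ⟨h1, h2⟩) (h3 | ⟨h3, h4⟩)
      · exact h3.trans h1.symm
      · exact absurd h1 h3
      · exact absurd h3 h1
      · exact eqv.injective (le_antisymm h2 h4)
    · intro x y
      by_cases hy : y = v
      · exact Or.inl (Or.inl hy)
      · by_cases hx : x = v
        · exact Or.inr (Or.inl hx)
        · rcases le_total (eqv x) (eqv y) with h | h
          · exact Or.inl (Or.inr ⟨hx, h⟩)
          · exact Or.inr (Or.inr ⟨hy, h⟩)
  refine ⟨fun j => if h : (j : ℕ) < n
      then (fun x y => y = eqv.symm ⟨j, h⟩ ∨ (x ≠ eqv.symm ⟨j, h⟩ ∧ base x y)) else base, ?_, ?_⟩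
  · intro j
    by_cases h : (j : ℕ) < n
    · simp only [dif_pos h]; exact htoplin _
    · simp only [dif_neg h]; exact hbaselin
  · intro x y z hxy hxz hyz hadj
    refine ⟨⟨(eqv x : ℕ), by omega⟩, ?_⟩
    beta_reduce; rw [dif_pos (show ((eqv x : ℕ)) < n from (eqv x).2)]
    exact ⟨Or.inl (eqv.symm_apply_apply x).symm, Or.inl (eqv.symm_apply_apply x).symm⟩

end Construction

/-- For any graph `G`, the least positive `t` admitting linear orders on `V(G)` satisfying
the edge-covering condition lies between `dim(P_G) − 1` and `dim(P_G)`. -/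
theorem stmt_14 {V : Type*} [Fintype V] (G : SimpleGraph V) :
    incDim G - 1 ≤ sInf {t | 0 < t ∧ ∃ L : Fin t → V → V → Prop,
        (∀ i, IsLinearOrder V (L i)) ∧
        (∀ x y z : V, x ≠ y → x ≠ z → y ≠ z → G.Adj y z → ∃ i, L i y x ∧ L i z x)} ∧
    sInf {t | 0 < t ∧ ∃ L : Fin t → V → V → Prop,
        (∀ i, IsLinearOrder V (L i)) ∧
        (∀ x y z : V, x ≠ y → x ≠ z → y ≠ z → G.Adj y z → ∃ i, L i y x ∧ L i z x)}
      ≤ incDim G := by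
  classical
  set S : Set ℕ := {t | 0 < t ∧ ∃ L : Fin t → V → V → Prop,
        (∀ i, IsLinearOrder V (L i)) ∧
        (∀ x y z : V, x ≠ y → x ≠ z → y ≠ z → G.Adj y z → ∃ i, L i y x ∧ L i z x)} with hS
  obtain ⟨L0, h0lin, h0cov⟩ := exists_family V G
  have hSne : S.Nonempty := ⟨Fintype.card V + 1, Nat.succ_pos _, L0, h0lin, h0cov⟩
  obtain ⟨hspos, L1, h1lin, h1cov⟩ := Nat.sInf_mem hSne
  obtain ⟨M, hMreal⟩ := down G hspos h1lin h1cov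
  have hDmem : (sInf S + 1) ∈ {t | 0 < t ∧ ∃ Lr : Fin t → IncGround G → IncGround G → Prop,
      IsRealizer (incLE G) Lr} := ⟨Nat.succ_pos _, M, hMreal⟩
  have hdim_le : incDim G ≤ sInf S + 1 := Nat.sInf_le hDmem
  have hDne : {t | 0 < t ∧ ∃ Lr : Fin t → IncGround G → IncGround G → Prop,
      IsRealizer (incLE G) Lr}.Nonempty := ⟨sInf S + 1, hDmem⟩
  obtain ⟨hdpos, Mr, hMr⟩ := Nat.sInf_mem hDne
  obtain ⟨L2, h2lin, h2cov⟩ := up G hMr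
  have h2 : sInf S ≤ incDim G := Nat.sInf_le ⟨hdpos, L2, h2lin, h2cov⟩
  exact ⟨by omega, h2⟩
end

section
/- Let P and P' be finite posets whose order diagrams D and D' (acyclic orientations of their cover graphs, with each covering pair x < y oriented from x to y) satisfy: D' is a subdiagram of D, i.e., the elements of P' are a subset of those of P and every covering edge of P' is a covering edge of P. Then dim_uc(P') ≤ dim_uc(P), where dim_uc denotes upper cover dimension. -/
open SimpleGraph

/-- In a finite partial order, `le x y` implies there is a chain of covers from `x` to `y`. -/
lemma covChain_aux {β : Type*} [Finite β] (r : β → β → Prop) (hr : IsPartialOrder β r)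
    {x y : β} (hxy : r x y) : Relation.ReflTransGen (CovRel r) x y := by
  letI : PartialOrder β :=
    { le := r
      le_refl := hr.refl
      le_trans := fun a b c => hr.trans a b c
      le_antisymm := fun a b => hr.antisymm a b }
  letI : Fintype β := Fintype.ofFinite β
  letI : @DecidableRel β β (· < ·) := Classical.decRel _
  letI : @DecidableRel β β (· ≤ ·) := Classical.decRel _
  letI := Fintype.toLocallyFiniteOrder (α := β)
  have h1 : x ≤ y := hxy
  rw [le_iff_reflTransGen_covBy] at h1
  refine Relation.ReflTransGen.mono ?_ _ _ h1
  intro a b hab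
  refine ⟨hab.lt.le, hab.lt.ne, fun z hz hz' => ?_⟩
  by_cases hza : z = a
  · exact Or.inl hza
  · right
    by_contra hzb
    exact hab.2 (lt_of_le_of_ne hz (Ne.symm hza)) (lt_of_le_of_ne hz' hzb)

/-- For an incomparable-ish pair (`¬ x ≤ y`) there is a linear extension placing `y` below `x`. -/
lemma exists_flip_ext {α : Type*} [PartialOrder α] {x y : α} (hxy : ¬ x ≤ y) :
    ∃ L : α → α → Prop, IsLinearOrder α L ∧ (∀ a b : α, a ≤ b → L a b) ∧ L y x := by
  let q : α → α → Prop := fun u v => u ≤ v ∨ (u ≤ y ∧ x ≤ v)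
  haveI : IsPartialOrder α q :=
    { refl := fun a => Or.inl le_rfl
      trans := by
        rintro a b c (hab | ⟨hab1, hab2⟩) (hbc | ⟨hbc1, hbc2⟩)
        · exact Or.inl (hab.trans hbc)
        · exact Or.inr ⟨hab.trans hbc1, hbc2⟩
        · exact Or.inr ⟨hab1, hab2.trans hbc⟩
        · exact Or.inr ⟨hab1, hbc2⟩
      antisymm := by
        rintro a b (hab | ⟨hab1, hab2⟩) (hba | ⟨hba1, hba2⟩)
        · exact le_antisymm hab hba
        · exact absurd ((hba2.trans hab).trans hba1) hxy
        · exact absurd ((hab2.trans hba).trans hab1) hxy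
        · exact absurd (hab2.trans hba1) hxy }
  obtain ⟨L, hL, hq⟩ := extend_partialOrder q
  exact ⟨L, hL, fun a b hab => hq _ _ (Or.inl hab), hq _ _ (Or.inr ⟨le_rfl, le_rfl⟩)⟩

/-- Two distinct lower covers of the same element are incomparable. -/
lemma covers_not_le {α : Type*} (le : α → α → Prop) (href : ∀ a : α, le a a)
    {z x y : α} (hx : CovRel le x z) (hy : CovRel le y z) (hxy : x ≠ y) : ¬ le x y := by
  intro hle
  rcases hx.2.2 y hle hy.1 with h | h
  · exact hxy h.symm
  · exact hy.2.1 h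

/-- Every finite partial order admits an upper-cover realizer. -/
lemma exists_ucRealizer (α : Type*) [Fintype α] [PartialOrder α] :
    ∃ t, 0 < t ∧ ∃ L : Fin t → α → α → Prop, IsUCRealizer ((· ≤ ·) : α → α → Prop) L := by
  classical
  obtain ⟨L0, hL0, h0⟩ := extend_partialOrder ((· ≤ ·) : α → α → Prop)
  have key : ∀ p : α × α, ∃ L : α → α → Prop,
      IsLinearOrder α L ∧ (∀ a b : α, a ≤ b → L a b) ∧ (¬ p.1 ≤ p.2 → L p.2 p.1) := by
    intro p
    by_cases hp : p.1 ≤ p.2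
    · exact ⟨L0, hL0, fun a b hab => h0 _ _ hab, fun hc => absurd hp hc⟩
    · obtain ⟨L, h1, h2, h3⟩ := exists_flip_ext hp
      exact ⟨L, h1, h2, fun _ => h3⟩
  choose F hF1 hF2 hF3 using key
  set n := Fintype.card (α × α) with hn
  refine ⟨n + 1, Nat.succ_pos _, fun i =>
    if h : (i : ℕ) < n then F ((Fintype.equivFin (α × α)).symm ⟨i, h⟩) else L0, ?_, ?_, ?_⟩
  · intro i
    by_cases h : (i : ℕ) < n
    · simpa [h] using hF1 _
    · simpa [h] using hL0
  · intro a b hab i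
    by_cases h : (i : ℕ) < n
    · simpa [h] using hF2 _ a b hab
    · simpa [h] using h0 _ _ hab
  · intro z x y hx hy hxy
    have hnle : ¬ x ≤ y := covers_not_le _ le_refl hx hy hxy
    set j := Fintype.equivFin (α × α) (x, y) with hj
    refine ⟨⟨(j : ℕ), lt_trans j.2 (Nat.lt_succ_self _)⟩, ?_⟩
    show (if h : (j : ℕ) < n then F ((Fintype.equivFin (α × α)).symm ⟨(j : ℕ), h⟩) else L0) y x
    rw [dif_pos j.2]
    have : (⟨(j : ℕ), j.2⟩ : Fin n) = j := rfl
    rw [this, hj, Equiv.symm_apply_apply]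
    exact hF3 (x, y) hnle

/-- If the diagram of `P'` is a subdiagram of the diagram of `P` (the elements of `P'` form a
subset of those of `P` and every covering edge of `P'` is a covering edge of `P`), then
`dim_uc(P') ≤ dim_uc(P)`. -/
theorem stmt_15 {α : Type*} [Fintype α] [PartialOrder α] (s : Set α)
    (le' : s → s → Prop) (h : IsPartialOrder s le')
    (hcov : ∀ x y : s, CovRel le' x y → CovRel ((· ≤ ·) : α → α → Prop) (x : α) (y : α)) :
    dimUC le' ≤ dimUC ((· ≤ ·) : α → α → Prop) := by
  -- `le'` implies `≤` on α, via chains of covers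
  have hle : ∀ x y : s, le' x y → (x : α) ≤ y := by
    intro x y hxy
    have hchain := covChain_aux le' h hxy
    clear hxy
    induction hchain with
    | refl => rfl
    | tail _ hc ih => exact le_trans ih (hcov _ _ hc).1
  -- the set for α is a subset of the set for s
  have hsub : ∀ t : ℕ, (0 < t ∧ ∃ L : Fin t → α → α → Prop,
      IsUCRealizer ((· ≤ ·) : α → α → Prop) L) →
      0 < t ∧ ∃ L : Fin t → s → s → Prop, IsUCRealizer le' L := by
    rintro t ⟨ht, L, hlin, hext, huc⟩
    refine ⟨ht, fun i u v => L i (u : α) (v : α), ?_, ?_, ?_⟩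
    · intro i
      haveI := hlin i
      exact
        { refl := fun a => (hlin i).refl (a : α)
          trans := fun a b c hab hbc => (hlin i).trans _ _ _ hab hbc
          antisymm := fun a b hab hba => Subtype.ext ((hlin i).antisymm _ _ hab hba)
          total := fun a b => (hlin i).total (a : α) (b : α) }
    · intro x y hxy i
      exact hext _ _ (hle x y hxy) i
    · intro z x y hx hy hxy
      obtain ⟨i, hi⟩ := huc (z : α) (x : α) (y : α) (hcov _ _ hx) (hcov _ _ hy)
        (fun hc => hxy (Subtype.ext hc))
      exact ⟨i, hi⟩
  obtain ⟨t, ht⟩ := exists_ucRealizer α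
  have hmem : dimUC ((· ≤ ·) : α → α → Prop) ∈
      {t | 0 < t ∧ ∃ L : Fin t → α → α → Prop, IsUCRealizer ((· ≤ ·) : α → α → Prop) L} :=
    Nat.sInf_mem ⟨t, ht⟩
  exact Nat.sInf_le (hsub _ hmem)
end

section
/- For every r ≥ 1, there exists a poset P of height exactly r whose cover graph is triangle-free and has chromatic number exactly r; moreover r is the minimum possible height for such a poset. -/
open SimpleGraph

def QType : ℕ → Type
  | 0 => Unit
  | n+1 => (Fin (n+1) × QType n) ⊕ (Fin (n+1) → QType n)

def Qle : (n : ℕ) → QType n → QType n → Prop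
  | 0, _, _ => True
  | n+1, a, b =>
    match (a : (Fin (n+1) × QType n) ⊕ (Fin (n+1) → QType n)),
          (b : (Fin (n+1) × QType n) ⊕ (Fin (n+1) → QType n)) with
    | Sum.inl p, Sum.inl q => p.1 = q.1 ∧ Qle n p.2 q.2
    | Sum.inl p, Sum.inr f => Qle n p.2 (f p.1)
    | Sum.inr _, Sum.inl _ => False
    | Sum.inr f, Sum.inr g => f = g

instance QType.fintype : ∀ n, Fintype (QType n)
  | 0 => inferInstanceAs (Fintype Unit)
  | n+1 =>
    letI := QType.fintype n
    inferInstanceAs (Fintype ((Fin (n+1) × QType n) ⊕ (Fin (n+1) → QType n)))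

theorem Qle_partial : ∀ n, IsPartialOrder (QType n) (Qle n) := by
  intro n
  induction n with
  | zero =>
    exact { refl := fun _ => trivial, trans := fun _ _ _ _ _ => trivial,
            antisymm := fun a b _ _ => rfl }
  | succ n ih =>
    refine { refl := ?_, trans := ?_, antisymm := ?_ }
    · rintro (p | f)
      · exact ⟨rfl, ih.refl _⟩
      · rfl
    · rintro (p | f) (q | g) (s | h) hab hbc <;> simp only [Qle] at *
      · exact ⟨hab.1.trans hbc.1, ih.trans _ _ _ hab.2 hbc.2⟩
      · rw [hab.1]; exact ih.trans _ _ _ hab.2 hbc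
      · rw [← hbc]; exact hab
      · exact hab.trans hbc
    · rintro (p | f) (q | g) hab hba <;> simp only [Qle] at *
      · obtain ⟨h1, h2⟩ := hab
        obtain ⟨h1', h2'⟩ := hba
        have : p.2 = q.2 := ih.antisymm _ _ h2 h2'
        cases p; cases q; simp only at h1 this; subst h1 this; rfl
      · rw [hab]

theorem qle_inl_inl {n} {p q : Fin (n+1) × QType n} :
    Qle (n+1) (Sum.inl p) (Sum.inl q) ↔ p.1 = q.1 ∧ Qle n p.2 q.2 := Iff.rfl

theorem qle_inl_inr {n} {p : Fin (n+1) × QType n} {f : Fin (n+1) → QType n} :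
    Qle (n+1) (Sum.inl p) (Sum.inr f) ↔ Qle n p.2 (f p.1) := Iff.rfl

theorem qle_inr_inl {n} {p : Fin (n+1) × QType n} {f : Fin (n+1) → QType n} :
    Qle (n+1) (Sum.inr f) (Sum.inl p) ↔ False := Iff.rfl

theorem qle_inr_inr {n} {f g : Fin (n+1) → QType n} :
    Qle (n+1) (Sum.inr f) (Sum.inr g) ↔ f = g := Iff.rfl

theorem covrel_succ {n : ℕ} {a b : QType (n+1)} :
    CovRel (Qle (n+1)) a b ↔
      ((∃ i x y, a = Sum.inl (i,x) ∧ b = Sum.inl (i,y) ∧ CovRel (Qle n) x y) ∨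
       (∃ f : Fin (n+1) → QType n, ∃ i, a = Sum.inl (i, f i) ∧ b = Sum.inr f)) := by
  constructor
  · rintro ⟨hle, hne, hbet⟩
    rcases a with ⟨i, x⟩ | f <;> rcases b with ⟨j, y⟩ | g
    · left
      obtain ⟨hij, hxy⟩ := qle_inl_inl.mp hle
      simp only at hij hxy
      subst hij
      refine ⟨i, x, y, rfl, rfl, hxy, ?_, ?_⟩
      · rintro rfl; exact hne rfl
      · intro z h1 h2
        have := hbet (Sum.inl (i, z)) (qle_inl_inl.mpr ⟨rfl, h1⟩)
          (qle_inl_inl.mpr ⟨rfl, h2⟩)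
        rcases this with h | h <;> [left; right] <;>
          exact congrArg Prod.snd (Sum.inl.inj h)
    · right
      replace hle := qle_inl_inr.mp hle
      simp only at hle
      have := hbet (Sum.inl (i, g i)) (qle_inl_inl.mpr ⟨rfl, hle⟩)
        (qle_inl_inr.mpr ((Qle_partial n).refl _))
      rcases this with h | h
      · refine ⟨g, i, ?_, rfl⟩
        have h2 := congrArg Prod.snd (Sum.inl.inj h)
        simp only at h2
        rw [h2]
      · exact (Sum.inl_ne_inr h).elim
    · exact absurd hle (qle_inr_inl.mp ∘ id)
    · exact absurd (qle_inr_inr.mp hle) (fun h => hne (by rw [h]))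
  · rintro (⟨i, x, y, rfl, rfl, hc⟩ | ⟨f, i, rfl, rfl⟩)
    · refine ⟨qle_inl_inl.mpr ⟨rfl, hc.1⟩, ?_, ?_⟩
      · intro h
        exact hc.2.1 (congrArg Prod.snd (Sum.inl.inj h))
      · rintro (⟨j, z⟩ | h) h1 h2
        · obtain ⟨hj, hz1⟩ := qle_inl_inl.mp h1
          obtain ⟨_, hz2⟩ := qle_inl_inl.mp h2
          simp only at hj hz1 hz2
          subst hj
          rcases hc.2.2 z hz1 hz2 with h | h <;> [left; right] <;> rw [h]
        · exact absurd (qle_inr_inl.mp h2) id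
    · refine ⟨qle_inl_inr.mpr ((Qle_partial n).refl _), Sum.inl_ne_inr, ?_⟩
      rintro (⟨j, z⟩ | h) h1 h2
      · obtain ⟨hj, hz1⟩ := qle_inl_inl.mp h1
        simp only at hj hz1
        replace h2 := qle_inl_inr.mp h2
        simp only at h2
        left
        subst hj
        have : z = f i := (Qle_partial n).antisymm _ _ h2 hz1
        rw [this]
      · right
        rw [qle_inr_inr.mp h2]


instance QType.deq : ∀ n, DecidableEq (QType n)
  | 0 => inferInstanceAs (DecidableEq Unit)
  | n+1 =>
    letI := QType.deq n
    inferInstanceAs (DecidableEq ((Fin (n+1) × QType n) ⊕ (Fin (n+1) → QType n)))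

instance : Subsingleton (QType 0) := inferInstanceAs (Subsingleton Unit)

theorem adj_succ {n : ℕ} {a b : QType (n+1)} :
    (coverGraph (Qle (n+1))).Adj a b ↔
      ((∃ i x y, a = Sum.inl (i,x) ∧ b = Sum.inl (i,y) ∧ (coverGraph (Qle n)).Adj x y) ∨
       (∃ f : Fin (n+1) → QType n, ∃ i, a = Sum.inl (i, f i) ∧ b = Sum.inr f) ∨
       (∃ f : Fin (n+1) → QType n, ∃ i, b = Sum.inl (i, f i) ∧ a = Sum.inr f)) := by
  show (CovRel _ a b ∨ CovRel _ b a) ↔ _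
  rw [covrel_succ, covrel_succ]
  constructor
  · rintro ((⟨i,x,y,rfl,rfl,h⟩ | ⟨f,i,rfl,rfl⟩) | (⟨i,x,y,rfl,rfl,h⟩ | ⟨f,i,rfl,rfl⟩))
    · exact Or.inl ⟨i, x, y, rfl, rfl, Or.inl h⟩
    · exact Or.inr (Or.inl ⟨f, i, rfl, rfl⟩)
    · exact Or.inl ⟨i, y, x, rfl, rfl, Or.inr h⟩
    · exact Or.inr (Or.inr ⟨f, i, rfl, rfl⟩)
  · rintro (⟨i,x,y,rfl,rfl,(h | h)⟩ | ⟨f,i,rfl,rfl⟩ | ⟨f,i,rfl,rfl⟩)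
    · exact Or.inl (Or.inl ⟨i, x, y, rfl, rfl, h⟩)
    · exact Or.inr (Or.inl ⟨i, y, x, rfl, rfl, h⟩)
    · exact Or.inl (Or.inr ⟨f, i, rfl, rfl⟩)
    · exact Or.inr (Or.inr ⟨f, i, rfl, rfl⟩)

theorem Qtrifree : ∀ n, (coverGraph (Qle n)).CliqueFree 3 := by
  intro n
  induction n with
  | zero =>
    intro s hs
    rw [SimpleGraph.is3Clique_iff] at hs
    obtain ⟨a, b, c, hab, -, -, -⟩ := hs
    exact (coverGraph (Qle 0)).loopless.irrefl a (Subsingleton.elim a b ▸ hab)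
  | succ n ih =>
    have L1 : ∀ {i j : Fin (n+1)} {x y : QType n},
        (coverGraph (Qle (n+1))).Adj (Sum.inl (i,x)) (Sum.inl (j,y)) →
        i = j ∧ (coverGraph (Qle n)).Adj x y := by
      intro i j x y h
      rcases adj_succ.mp h with ⟨i',x',y',h1,h2,h3⟩|⟨f,i',h1,h2⟩|⟨f,i',h1,h2⟩
      · have e1 := Sum.inl.inj h1; have e2 := Sum.inl.inj h2
        refine ⟨(congrArg Prod.fst e1).trans (congrArg Prod.fst e2).symm, ?_⟩
        rw [show x = x' from congrArg Prod.snd e1, show y = y' from congrArg Prod.snd e2]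
        exact h3
      · exact (Sum.inl_ne_inr h2).elim
      · exact (Sum.inl_ne_inr h2).elim
    have L2 : ∀ {i : Fin (n+1)} {x : QType n} {f : Fin (n+1) → QType n},
        (coverGraph (Qle (n+1))).Adj (Sum.inl (i,x)) (Sum.inr f) → x = f i := by
      intro i x f h
      rcases adj_succ.mp h with ⟨i',x',y',h1,h2,h3⟩|⟨g,i',h1,h2⟩|⟨g,i',h1,h2⟩
      · exact (Sum.inr_ne_inl h2).elim
      · have e1 := Sum.inl.inj h1
        have e2 : f = g := Sum.inr.inj h2
        have hx : x = g i' := congrArg Prod.snd e1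
        have hi : i = i' := congrArg Prod.fst e1
        rw [hx, hi, e2]
      · exact (Sum.inl_ne_inr h2).elim
    have L3 : ∀ {f g : Fin (n+1) → QType n},
        ¬ (coverGraph (Qle (n+1))).Adj (Sum.inr f) (Sum.inr g) := by
      intro f g h
      rcases adj_succ.mp h with ⟨i',x',y',h1,h2,h3⟩|⟨g',i',h1,h2⟩|⟨g',i',h1,h2⟩
      · exact Sum.inr_ne_inl h1
      · exact Sum.inr_ne_inl h1
      · exact Sum.inr_ne_inl h1
    intro s hs
    rw [SimpleGraph.is3Clique_iff] at hs
    obtain ⟨a, b, c, hab, hac, hbc, -⟩ := hs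
    rcases a with ⟨i,x⟩|f <;> rcases b with ⟨j,y⟩|g <;> rcases c with ⟨k,z⟩|h
    · obtain ⟨hij, hxy⟩ := L1 hab
      obtain ⟨hik, hxz⟩ := L1 hac
      obtain ⟨hjk, hyz⟩ := L1 hbc
      exact ih {x,y,z} (SimpleGraph.is3Clique_iff.mpr ⟨x,y,z,hxy,hxz,hyz,rfl⟩)
    · obtain ⟨hij, hxy⟩ := L1 hab
      have h1 := L2 hac; have h2 := L2 hbc
      subst hij
      rw [h1, h2] at hxy
      exact (coverGraph (Qle n)).loopless.irrefl _ hxy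
    · obtain ⟨hik, hxz⟩ := L1 hac
      have h1 := L2 hab; have h2 := L2 hbc.symm
      subst hik
      rw [h1, h2] at hxz
      exact (coverGraph (Qle n)).loopless.irrefl _ hxz
    · exact L3 hbc
    · obtain ⟨hjk, hyz⟩ := L1 hbc
      have h1 := L2 hab.symm; have h2 := L2 hac.symm
      subst hjk
      rw [h1, h2] at hyz
      exact (coverGraph (Qle n)).loopless.irrefl _ hyz
    · exact L3 hac
    · exact L3 hab
    · exact L3 hab

def Qlevel : (n : ℕ) → QType n → Fin (n+1)
  | 0, _ => 0
  | n+1, a =>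
    match (a : (Fin (n+1) × QType n) ⊕ (Fin (n+1) → QType n)) with
    | Sum.inl p => (Qlevel n p.2).castSucc
    | Sum.inr _ => Fin.last (n+1)

theorem Qlevel_ne : ∀ n, ∀ x y : QType n, CovRel (Qle n) x y → Qlevel n x ≠ Qlevel n y := by
  intro n
  induction n with
  | zero => exact fun x y h => absurd (Subsingleton.elim x y) h.2.1
  | succ n ih =>
    intro a b h
    rcases covrel_succ.mp h with ⟨i,x,y,rfl,rfl,hc⟩ | ⟨f,i,rfl,rfl⟩
    · show (Qlevel n x).castSucc ≠ (Qlevel n y).castSucc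
      exact fun hh => ih x y hc (Fin.castSucc_injective _ hh)
    · show (Qlevel n (f i)).castSucc ≠ Fin.last (n+1)
      exact Fin.ne_of_lt (Fin.castSucc_lt_last _)

theorem Qcolorable (n : ℕ) : (coverGraph (Qle n)).Colorable (n+1) :=
  ⟨SimpleGraph.Coloring.mk (Qlevel n) (by
    rintro a b (h | h)
    · exact Qlevel_ne n a b h
    · exact (Qlevel_ne n b a h).symm)⟩

theorem Qnotcolorable : ∀ n, ¬ (coverGraph (Qle n)).Colorable n := by
  intro n
  induction n with
  | zero => rintro ⟨C⟩; exact (C ()).elim0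
  | succ n ih =>
    rintro ⟨C⟩
    -- every color appears in every copy
    have hall : ∀ i c : Fin (n+1), ∃ x : QType n, C (Sum.inl (i, x)) = c := by
      intro i c
      by_contra hcon
      push_neg at hcon
      refine ih ?_
      have CC : (coverGraph (Qle n)).Coloring {d : Fin (n+1) // d ≠ c} := by
        refine SimpleGraph.Coloring.mk (fun x => ⟨C (Sum.inl (i, x)), hcon x⟩) ?_
        intro x y hxy hne
        have hadj : (coverGraph (Qle (n+1))).Adj (Sum.inl (i,x)) (Sum.inl (i,y)) :=
          adj_succ.mpr (Or.inl ⟨i, x, y, rfl, rfl, hxy⟩)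
        exact C.valid hadj (by simpa using hne)
      have hcard : Fintype.card {d : Fin (n+1) // d ≠ c} = n := by
        simp [Fintype.card_subtype_compl]
      have h2 := CC.colorable
      rwa [hcard] at h2
    choose v hv using fun i => hall i i
    set t : QType (n+1) := Sum.inr v with ht
    set j := C t with hj
    have hadj : (coverGraph (Qle (n+1))).Adj (Sum.inl (j, v j)) t :=
      adj_succ.mpr (Or.inr (Or.inl ⟨v, j, rfl, rfl⟩))
    exact C.valid hadj (by rw [hv j, hj])

theorem Qchrom (n : ℕ) : (coverGraph (Qle n)).chromaticNumber = ((n+1 : ℕ) : ℕ∞) := by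
  apply le_antisymm
  · exact (Qcolorable n).chromaticNumber_le
  · by_contra hlt
    push_neg at hlt
    have hch : (coverGraph (Qle n)).chromaticNumber ≤ ((n : ℕ) : ℕ∞) := by
      push_cast at hlt
      exact Order.le_of_lt_add_one hlt
    exact Qnotcolorable n (SimpleGraph.chromaticNumber_le_iff_colorable.mp hch)

theorem Qheight_chain : ∀ n, ∃ c : Finset (QType n),
    IsChain (Qle n) ↑c ∧ c.card = n+1 ∧ ∃ m ∈ c, ∀ x ∈ c, Qle n x m := by
  intro n
  induction n with
  | zero =>
    refine ⟨{()}, ?_, rfl, (), Finset.mem_singleton_self _, fun x _ => trivial⟩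
    intro a _ b _ hab; exact absurd (Subsingleton.elim a b) hab
  | succ n ih =>
    obtain ⟨c, hc, hcard, m, hm, hmax⟩ := ih
    classical
    set t : QType (n+1) := Sum.inr (fun _ => m) with ht
    refine ⟨insert t (c.image (fun x => @id (QType (n+1)) (Sum.inl (0, x)))), ?_, ?_, t, ?_, ?_⟩
    · intro a ha b hb hne
      simp only [Finset.coe_insert, Set.mem_insert_iff, Finset.coe_image, Set.mem_image,
        Finset.mem_coe, Finset.mem_image] at ha hb
      rcases ha with rfl | ⟨x, hx, rfl⟩
      · rcases hb with rfl | ⟨y, hy, rfl⟩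
        · exact absurd rfl hne
        · exact Or.inr (qle_inl_inr.mpr (hmax y hy))
      · rcases hb with rfl | ⟨y, hy, rfl⟩
        · exact Or.inl (qle_inl_inr.mpr (hmax x hx))
        · rcases hc hx hy (fun hh => hne (by rw [hh])) with h | h
          · exact Or.inl (qle_inl_inl.mpr ⟨rfl, h⟩)
          · exact Or.inr (qle_inl_inl.mpr ⟨rfl, h⟩)
    · rw [Finset.card_insert_of_notMem, Finset.card_image_of_injective _ ?_, hcard]
      · intro x y hxy
        exact congrArg Prod.snd (Sum.inl.inj hxy)
      · intro hmem
        obtain ⟨x, hx, hh⟩ := Finset.mem_image.mp hmem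
        exact Sum.inl_ne_inr hh
    · exact Finset.mem_insert_self _ _
    · intro x hx
      rcases Finset.mem_insert.mp hx with rfl | hx'
      · exact (Qle_partial (n+1)).refl _
      · obtain ⟨y, hy, rfl⟩ := Finset.mem_image.mp hx'
        exact qle_inl_inr.mpr (hmax y hy)

theorem Qheight_ub : ∀ n, ∀ c : Finset (QType n), IsChain (Qle n) ↑c → c.card ≤ n+1 := by
  intro n
  induction n with
  | zero =>
    intro c _
    exact Finset.card_le_one.mpr (fun a _ b _ => Subsingleton.elim a b) |>.trans (le_refl 1)
  | succ n ih =>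
    intro c hc
    classical
    set P : QType (n+1) → Prop := fun a => ∃ p : Fin (n+1) × QType n, a = Sum.inl p with hP
    set cL : Finset (QType (n+1)) := c.filter P with hcL
    set cR : Finset (QType (n+1)) := c.filter (fun a => ¬ P a) with hcR
    have hsplit : cL.card + cR.card = c.card := Finset.card_filter_add_card_filter_not _
    have hR : cR.card ≤ 1 := by
      refine Finset.card_le_one.mpr ?_
      intro a ha b hb
      obtain ⟨haC, ha2⟩ := Finset.mem_filter.mp ha
      obtain ⟨hbC, hb2⟩ := Finset.mem_filter.mp hb
      rcases a with p | f
      · exact absurd ⟨p, rfl⟩ ha2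
      rcases b with q | g
      · exact absurd ⟨q, rfl⟩ hb2
      by_cases hab : (Sum.inr f : QType (n+1)) = Sum.inr g
      · exact hab
      · rcases hc haC hbC hab with h | h
        · rw [qle_inr_inr.mp h]
        · rw [qle_inr_inr.mp h]
    have hL : cL.card ≤ n+1 := by
      rcases Finset.eq_empty_or_nonempty cL with he | ⟨a0, ha0⟩
      · simp [he]
      obtain ⟨ha0C, i0, x0, rfl⟩ :
          a0 ∈ c ∧ ∃ i0 x0, a0 = Sum.inl (i0, x0) := by
        obtain ⟨hm, p, hp⟩ := Finset.mem_filter.mp ha0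
        exact ⟨hm, p.1, p.2, by rw [hp]⟩
      have hsame : ∀ a ∈ cL, ∃ x : QType n, a = Sum.inl (i0, x) := by
        intro a ha
        obtain ⟨haC, ⟨j, x⟩, rfl⟩ := Finset.mem_filter.mp ha
        refine ⟨x, ?_⟩
        by_cases hab : (Sum.inl (j, x) : QType (n+1)) = Sum.inl (i0, x0)
        · have hji : j = i0 := congrArg Prod.fst (Sum.inl.inj hab)
          rw [hji]
        · rcases hc haC ha0C hab with h | h
          · have hji : j = i0 := (qle_inl_inl.mp h).1
            rw [hji]
          · have hji : i0 = j := (qle_inl_inl.mp h).1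
            rw [hji]
      set g : QType (n+1) → QType n :=
        (fun a => match (a : (Fin (n+1) × QType n) ⊕ (Fin (n+1) → QType n)) with
          | Sum.inl p => p.2
          | Sum.inr _ => x0) with hg
      have hinj : Set.InjOn g ↑cL := by
        intro a ha b hb hgab
        obtain ⟨x, rfl⟩ := hsame a (Finset.mem_coe.mp ha)
        obtain ⟨y, rfl⟩ := hsame b (Finset.mem_coe.mp hb)
        have hxy : x = y := hgab
        rw [hxy]
      have hchain : IsChain (Qle n) ↑(cL.image g) := by
        intro u hu v hv huv
        simp only [Finset.coe_image, Set.mem_image, Finset.mem_coe] at hu hv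
        obtain ⟨a, ha, rfl⟩ := hu
        obtain ⟨b, hb, rfl⟩ := hv
        obtain ⟨x, rfl⟩ := hsame a ha
        obtain ⟨y, rfl⟩ := hsame b hb
        have hxy : (Sum.inl (i0,x) : QType (n+1)) ≠ Sum.inl (i0,y) := by
          intro hh; exact huv (congrArg g hh)
        rcases hc (Finset.mem_of_mem_filter _ ha) (Finset.mem_of_mem_filter _ hb) hxy with h | h
        · exact Or.inl (qle_inl_inl.mp h).2
        · exact Or.inr (qle_inl_inl.mp h).2
      have hcard := ih (cL.image g) hchain
      rwa [Finset.card_image_of_injOn hinj] at hcard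
    omega

theorem chrom_le_height {α : Type} [Fintype α] (le : α → α → Prop)
    (hpo : IsPartialOrder α le) :
    ∃ n : ℕ, (coverGraph le).Colorable n ∧ ∃ c : Finset α, IsChain le ↑c ∧ c.card = n := by
  classical
  set S : Finset (Finset α) := Finset.univ.filter (fun c => IsChain le ↑c) with hS
  have hemp : (∅ : Finset α) ∈ S := by
    rw [hS]; refine Finset.mem_filter.mpr ⟨Finset.mem_univ _, ?_⟩
    rw [Finset.coe_empty]; exact Set.pairwise_empty _
  set n := S.sup Finset.card with hn
  obtain ⟨c0, hc0S, hc0⟩ := Finset.exists_mem_eq_sup S ⟨∅, hemp⟩ Finset.card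
  have hub : ∀ c : Finset α, IsChain le ↑c → c.card ≤ n := by
    intro c hc
    exact Finset.le_sup (Finset.mem_filter.mpr ⟨Finset.mem_univ _, hc⟩)
  -- height function
  set T : α → Finset (Finset α) := fun x =>
    Finset.univ.filter (fun c => IsChain le ↑c ∧ x ∈ c ∧ ∀ y ∈ c, le y x) with hT
  set f : α → ℕ := fun x => (T x).sup Finset.card with hf
  have hsing : ∀ x, {x} ∈ T x := by
    intro x
    refine Finset.mem_filter.mpr ⟨Finset.mem_univ _, ?_, Finset.mem_singleton_self x, ?_⟩
    · rw [Finset.coe_singleton]; exact Set.pairwise_singleton _ _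
    · intro y hy
      rw [Finset.mem_singleton.mp hy]
      exact hpo.refl x
  have hf1 : ∀ x, 1 ≤ f x := fun x => by
    have h := Finset.le_sup (f := Finset.card) (hsing x)
    rw [Finset.card_singleton] at h
    exact h
  have hfn : ∀ x, f x ≤ n := by
    intro x
    refine Finset.sup_le ?_
    intro c hc
    exact hub c (Finset.mem_filter.mp hc).2.1
  have hmono : ∀ x y, le x y → x ≠ y → f x < f y := by
    intro x y hxy hne
    obtain ⟨c, hcT, hceq⟩ := Finset.exists_mem_eq_sup (T x) ⟨{x}, hsing x⟩ Finset.card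
    obtain ⟨-, hch, hxc, hall⟩ :
        c ∈ Finset.univ ∧ IsChain le ↑c ∧ x ∈ c ∧ ∀ y ∈ c, le y x := by
      have := Finset.mem_filter.mp hcT
      exact ⟨this.1, this.2.1, this.2.2.1, this.2.2.2⟩
    have hy : y ∉ c := fun hyc => hne (hpo.antisymm _ _ hxy (hall y hyc))
    have hins : insert y c ∈ T y := by
      refine Finset.mem_filter.mpr ⟨Finset.mem_univ _, ?_, Finset.mem_insert_self _ _, ?_⟩
      · rw [Finset.coe_insert]
        refine hch.insert ?_
        intro b hb _
        exact Or.inr (hpo.trans _ _ _ (hall b hb) hxy)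
      · intro z hz
        rcases Finset.mem_insert.mp hz with rfl | hz'
        · exact hpo.refl z
        · exact hpo.trans _ _ _ (hall z hz') hxy
    have hle := Finset.le_sup (f := Finset.card) hins
    rw [Finset.card_insert_of_notMem hy] at hle
    have e1 : f x = c.card := hceq
    have e2 : f y = (T y).sup Finset.card := rfl
    omega
  refine ⟨n, ⟨SimpleGraph.Coloring.mk
    (fun x => (⟨f x - 1, by have := hf1 x; have := hfn x; omega⟩ : Fin n)) ?_⟩,
    c0, (Finset.mem_filter.mp hc0S).2, hc0.symm⟩
  rintro a b (⟨h1, h2, -⟩ | ⟨h1, h2, -⟩) hcc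
  · have := hmono a b h1 h2
    have h1a := hf1 a
    exact absurd (congrArg Fin.val hcc) (by simp only; omega)
  · have := hmono b a h1 h2
    have h1b := hf1 b
    exact absurd (congrArg Fin.val hcc) (by simp only; omega)


/-- For every `r ≥ 1` there is a finite poset of height exactly `r` whose cover graph is
triangle-free with chromatic number exactly `r`; moreover `r` is the minimum possible
height: any finite poset whose cover graph has chromatic number `r` has a chain of size
at least `r`. -/
theorem stmt_18 (r : ℕ) (hr : 1 ≤ r) :
    (∃ (α : Type) (_ : Fintype α) (le : α → α → Prop),
      IsPartialOrder α le ∧ HeightEq le r ∧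
      (coverGraph le).CliqueFree 3 ∧
      (coverGraph le).chromaticNumber = (r : ℕ∞)) ∧
    (∀ (α : Type) (le : α → α → Prop), Fintype α → IsPartialOrder α le →
      (coverGraph le).chromaticNumber = (r : ℕ∞) →
      ∃ c : Finset α, IsChain le (c : Set α) ∧ r ≤ c.card) := by
  obtain ⟨n, rfl⟩ : ∃ n, r = n + 1 := ⟨r - 1, by omega⟩
  constructor
  · refine ⟨QType n, QType.fintype n, Qle n, Qle_partial n, ⟨?_, ?_⟩, Qtrifree n, Qchrom n⟩
    · obtain ⟨c, hc, hcard, -⟩ := Qheight_chain n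
      exact ⟨c, hc, hcard⟩
    · exact Qheight_ub n
  · intro α le fin hpo hchrom
    haveI := fin
    obtain ⟨m, hcol, c, hc, hcard⟩ := chrom_le_height le hpo
    have h1 : (coverGraph le).chromaticNumber ≤ (m : ℕ∞) :=
      SimpleGraph.chromaticNumber_le_iff_colorable.mpr hcol
    rw [hchrom] at h1
    have h2 : n + 1 ≤ m := by exact_mod_cast h1
    exact ⟨c, hc, by omega⟩
end
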